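/- arXiv:2011.13015 — 6 statements merged into one kernel-verified Lean document; each statement's English description precedes it below -/
import Mathlib

section
/- Let a, b be real numbers with 0 < a and b < 10a. Then no real-valued random variable X whose range is contained in [a, b] (i.e., P(a ≤ X ≤ b) = 1) is Benford. -/
open MeasureTheory

/-- The decimal significand: for `x ≠ 0`, the unique `t ∈ [1,10)` with
`|x| = 10^k * t` for some integer `k`; `signif 0 = 0`. -/
noncomputable def signif (x : ℝ) : ℝ :=
  if x = 0 then 0 else |x| * (10 : ℝ) ^ (-⌊Real.logb 10 |x|⌋)

/-- A real random variable `X` on `(Ω, μ)` is Benford if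
`P(S(|X|) ≤ t) = log₁₀ t` for all `t ∈ [1,10)`. -/
def IsBenford {Ω : Type*} [MeasurableSpace Ω] (μ : Measure Ω) (X : Ω → ℝ) : Prop :=
  ∀ t ∈ Set.Ico (1 : ℝ) 10,
    μ {ω | signif |X ω| ≤ t} = ENNReal.ofReal (Real.logb 10 t)

lemma floor_logb_eq_of_mem {x : ℝ} {k : ℤ} (h1 : (10:ℝ)^k ≤ x) (h2 : x < (10:ℝ)^(k+1)) :
    ⌊Real.logb 10 x⌋ = k := by
  have hx : 0 < x := lt_of_lt_of_le (zpow_pos (by norm_num) k) h1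
  have hlog1 : (k:ℝ) ≤ Real.logb 10 x := by
    have := (Real.logb_le_logb (by norm_num : (1:ℝ) < 10)
      (zpow_pos (by norm_num : (0:ℝ)<10) k) hx).mpr h1
    rwa [← Real.rpow_intCast, Real.logb_rpow (by norm_num) (by norm_num)] at this
  have hlog2 : Real.logb 10 x < (k:ℝ) + 1 := by
    have := Real.logb_lt_logb (b := 10) (by norm_num) hx h2
    rwa [← Real.rpow_intCast, Real.logb_rpow (by norm_num) (by norm_num),
      Int.cast_add, Int.cast_one] at this
  exact Int.floor_eq_iff.mpr ⟨hlog1, hlog2⟩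

lemma signif_eq_of_mem {x : ℝ} {k : ℤ} (h1 : (10:ℝ)^k ≤ x) (h2 : x < (10:ℝ)^(k+1)) :
    signif x = x * (10:ℝ)^(-k) := by
  have hx : 0 < x := lt_of_lt_of_le (zpow_pos (by norm_num) k) h1
  rw [signif, if_neg hx.ne', abs_of_pos hx, floor_logb_eq_of_mem h1 h2]

lemma floor_logb_mem {x : ℝ} (hx : 0 < x) :
    (10:ℝ)^(⌊Real.logb 10 x⌋) ≤ x ∧ x < (10:ℝ)^(⌊Real.logb 10 x⌋ + 1) := by
  constructor
  · calc (10:ℝ)^(⌊Real.logb 10 x⌋) = (10:ℝ)^((⌊Real.logb 10 x⌋ : ℝ)) := by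
          rw [Real.rpow_intCast]
      _ ≤ (10:ℝ)^(Real.logb 10 x) :=
          Real.rpow_le_rpow_of_exponent_le (by norm_num) (Int.floor_le _)
      _ = x := Real.rpow_logb (by norm_num) (by norm_num) hx
  · calc x = (10:ℝ)^(Real.logb 10 x) := (Real.rpow_logb (by norm_num) (by norm_num) hx).symm
      _ < (10:ℝ)^(((⌊Real.logb 10 x⌋ : ℝ)) + 1) :=
          Real.rpow_lt_rpow_of_exponent_lt (by norm_num) (Int.lt_floor_add_one _)
      _ = (10:ℝ)^(⌊Real.logb 10 x⌋ + 1) := by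
          rw [← Real.rpow_intCast]; norm_num

/-- If `0 < a` and `b < 10a`, then no random variable with range contained in
`[a,b]` is Benford. -/
theorem no_benford_of_range_lt_one_order
    {Ω : Type*} [MeasurableSpace Ω] (μ : Measure Ω) [IsProbabilityMeasure μ]
    (X : Ω → ℝ) (hX : Measurable X) (a b : ℝ) (ha : 0 < a) (hb : b < 10 * a)
    (hrange : μ {ω | a ≤ X ω ∧ X ω ≤ b} = 1) :
    ¬ IsBenford μ X := by
  intro hB
  set E : Set Ω := {ω | a ≤ X ω ∧ X ω ≤ b} with hE
  have hEne : E.Nonempty := nonempty_of_measure_ne_zero (by rw [hrange]; exact one_ne_zero)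
  obtain ⟨ω₀, hω₀⟩ := hEne
  have hab : a ≤ b := le_trans hω₀.1 hω₀.2
  set k : ℤ := ⌊Real.logb 10 a⌋ with hk
  obtain ⟨hka, hak⟩ := floor_logb_mem ha
  have hten : (0:ℝ) < (10:ℝ)^k := zpow_pos (by norm_num) k
  have htenk1 : ((10:ℝ)^(k+1)) = (10:ℝ)^k * 10 := by rw [zpow_add_one₀]; norm_num
  have hEmeas : MeasurableSet E := by
    have : E = X ⁻¹' (Set.Icc a b) := rfl
    rw [this]; exact hX measurableSet_Icc
  have hEc : μ Eᶜ = 0 := by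
    rw [measure_compl hEmeas (measure_ne_top μ E), hrange, measure_univ]; simp
  by_cases hcase : b < (10:ℝ)^(k+1)
  · -- all of [a,b] in [10^k, 10^(k+1))
    set u : ℝ := b * (10:ℝ)^(-k) with hu
    have hu1 : (1:ℝ) ≤ u := by
      rw [hu]
      calc (1:ℝ) = (10:ℝ)^k * (10:ℝ)^(-k) := by
            rw [← zpow_add₀ (by norm_num : (10:ℝ) ≠ 0)]; simp
        _ ≤ b * (10:ℝ)^(-k) := by
            apply mul_le_mul_of_nonneg_right (le_trans hka hab) (zpow_pos (by norm_num) _).le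
    have hu10 : u < 10 := by
      rw [hu]
      have : b * (10:ℝ)^(-k) < (10:ℝ)^(k+1) * (10:ℝ)^(-k) := by
        apply mul_lt_mul_of_pos_right hcase (zpow_pos (by norm_num) _)
      calc b * (10:ℝ)^(-k) < (10:ℝ)^(k+1) * (10:ℝ)^(-k) := this
        _ = 10 := by rw [← zpow_add₀ (by norm_num : (10:ℝ) ≠ 0)]; norm_num
    have hsub : E ⊆ {ω | signif |X ω| ≤ u} := by
      intro ω hω
      have hx0 : 0 < X ω := lt_of_lt_of_le ha hω.1
      have h1 : (10:ℝ)^k ≤ |X ω| := by rw [abs_of_pos hx0]; exact le_trans hka hω.1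
      have h2 : |X ω| < (10:ℝ)^(k+1) := by
        rw [abs_of_pos hx0]; exact lt_of_le_of_lt hω.2 hcase
      have heq := signif_eq_of_mem h1 h2
      show signif |X ω| ≤ u
      rw [heq, abs_of_pos hx0, hu]
      exact mul_le_mul_of_nonneg_right hω.2 (zpow_pos (by norm_num : (0:ℝ) < 10) (-k)).le
    have h1 : μ {ω | signif |X ω| ≤ u} = 1 := by
      refine le_antisymm prob_le_one ?_
      rw [← hrange]; exact measure_mono hsub
    have := hB u ⟨hu1, hu10⟩
    rw [h1] at this
    have hlt : Real.logb 10 u < 1 := by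
      have := Real.logb_lt_logb (b := 10) (by norm_num) (by linarith) hu10
      rwa [Real.logb_self_eq_one (by norm_num)] at this
    have : (1:ENNReal) < 1 := by
      calc (1:ENNReal) = ENNReal.ofReal (Real.logb 10 u) := this
        _ < ENNReal.ofReal 1 := by
            exact ENNReal.ofReal_lt_ofReal_iff (by norm_num) |>.mpr hlt
        _ = 1 := by simp
    exact absurd this (lt_irrefl _)
  · -- 10^(k+1) ≤ b
    push_neg at hcase
    set s : ℝ := a * (10:ℝ)^(-k) with hs
    set v : ℝ := b * (10:ℝ)^(-(k+1)) with hv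
    have hs1 : (1:ℝ) ≤ s := by
      rw [hs]
      calc (1:ℝ) = (10:ℝ)^k * (10:ℝ)^(-k) := by
            rw [← zpow_add₀ (by norm_num : (10:ℝ) ≠ 0)]; simp
        _ ≤ a * (10:ℝ)^(-k) :=
            mul_le_mul_of_nonneg_right hka (zpow_pos (by norm_num) _).le
    have hs10 : s < 10 := by
      rw [hs]
      calc a * (10:ℝ)^(-k) < (10:ℝ)^(k+1) * (10:ℝ)^(-k) :=
            mul_lt_mul_of_pos_right hak (zpow_pos (by norm_num) _)
        _ = 10 := by rw [← zpow_add₀ (by norm_num : (10:ℝ) ≠ 0)]; norm_num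
    have hv1 : (1:ℝ) ≤ v := by
      have h := mul_le_mul_of_nonneg_right hcase
        (zpow_pos (by norm_num : (0:ℝ) < 10) (-(k+1))).le
      rwa [← zpow_add₀ (by norm_num : (10:ℝ) ≠ 0),
        show (k+1) + (-(k+1)) = 0 from by ring, zpow_zero] at h
    have hvs : v < s := by
      rw [hv, hs]
      have h10a : b * (10:ℝ)^(-(k+1)) < (10 * a) * (10:ℝ)^(-(k+1)) :=
        mul_lt_mul_of_pos_right hb (zpow_pos (by norm_num) _)
      calc b * (10:ℝ)^(-(k+1)) < (10 * a) * (10:ℝ)^(-(k+1)) := h10a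
        _ = a * (10:ℝ)^(-k) := by
            rw [show (-(k+1) : ℤ) = -k + -1 from by ring,
              zpow_add₀ (by norm_num : (10:ℝ) ≠ 0)]
            have h10 : ((10:ℝ))^(-1:ℤ) = 1/10 := by norm_num
            rw [h10]; ring
    set t : ℝ := (v + s) / 2 with ht
    have hvt : v < t := by rw [ht]; linarith
    have hts : t < s := by rw [ht]; linarith
    have ht1 : (1:ℝ) ≤ t := le_trans hv1 hvt.le
    have ht10 : t < 10 := lt_trans hts hs10
    -- key: on E, signif ≤ t implies signif ≤ v
    have hkey : {ω | signif |X ω| ≤ t} ∩ E ⊆ {ω | signif |X ω| ≤ v} := by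
      rintro ω ⟨hωt, hωE⟩
      have hx0 : 0 < X ω := lt_of_lt_of_le ha hωE.1
      have habs : |X ω| = X ω := abs_of_pos hx0
      simp only [Set.mem_setOf_eq] at hωt ⊢
      by_cases hxc : X ω < (10:ℝ)^(k+1)
      · exfalso
        have h1 : (10:ℝ)^k ≤ |X ω| := by rw [habs]; exact le_trans hka hωE.1
        have h2 : |X ω| < (10:ℝ)^(k+1) := by rw [habs]; exact hxc
        have heq := signif_eq_of_mem h1 h2
        rw [heq, habs] at hωt
        have : s ≤ X ω * (10:ℝ)^(-k) :=
          mul_le_mul_of_nonneg_right hωE.1 (zpow_pos (by norm_num) _).le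
        linarith
      · push_neg at hxc
        have h1 : (10:ℝ)^(k+1) ≤ |X ω| := by rw [habs]; exact hxc
        have h2 : |X ω| < (10:ℝ)^(k+1+1) := by
          rw [habs]
          calc X ω ≤ b := hωE.2
            _ < 10 * a := hb
            _ ≤ 10 * (10:ℝ)^(k+1) := by linarith [hak]
            _ = (10:ℝ)^(k+1+1) := by
                rw [zpow_add_one₀ (by norm_num : (10:ℝ) ≠ 0) (k+1),
                  zpow_add_one₀ (by norm_num : (10:ℝ) ≠ 0) k]
                ring
        have heq := signif_eq_of_mem h1 h2
        rw [heq, habs]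
        exact mul_le_mul_of_nonneg_right hωE.2 (zpow_pos (by norm_num) _).le
    have hmt := hB t ⟨ht1, ht10⟩
    have hmv := hB v ⟨hv1, lt_trans hvs hs10⟩
    have hsplit : μ {ω | signif |X ω| ≤ t} ≤ μ {ω | signif |X ω| ≤ v} + μ Eᶜ := by
      calc μ {ω | signif |X ω| ≤ t}
          ≤ μ ({ω | signif |X ω| ≤ t} ∩ E ∪ Eᶜ) := by
            apply measure_mono; intro ω hω
            by_cases h : ω ∈ E
            · exact Or.inl ⟨hω, h⟩
            · exact Or.inr h
        _ ≤ μ ({ω | signif |X ω| ≤ t} ∩ E) + μ Eᶜ := measure_union_le _ _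
        _ ≤ μ {ω | signif |X ω| ≤ v} + μ Eᶜ := by
            exact add_le_add (measure_mono (μ := μ) hkey) le_rfl
    rw [hmt, hmv, hEc, add_zero] at hsplit
    have hlogle : Real.logb 10 t ≤ Real.logb 10 v := by
      have h0v : 0 ≤ Real.logb 10 v := Real.logb_nonneg (by norm_num) hv1
      exact (ENNReal.ofReal_le_ofReal_iff h0v).mp hsplit
    have : Real.logb 10 v < Real.logb 10 t :=
      Real.logb_lt_logb (by norm_num) (by linarith) hvt
    linarith
end

section
/- Let a, b be real numbers with b > 10a > 0, and let c ∈ (0, b/10 − a). If U is uniformly distributed on [0,1], then the random variable X_c = (a + c) · 10^U has range contained in [a, b] and is Benford. -/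
open MeasureTheory

/-- `U` is uniformly distributed on `[a,b]`: its CDF is `(x-a)/(b-a)` on `[a,b]`. -/
def IsUniformOn {Ω : Type*} [MeasurableSpace Ω] (μ : Measure Ω) (U : Ω → ℝ)
    (a b : ℝ) : Prop :=
  ∀ x ∈ Set.Icc a b, μ {ω | U ω ≤ x} = ENNReal.ofReal ((x - a) / (b - a))

lemma signif_pos_eq {x : ℝ} (hx : 0 < x) :
    signif x = (10 : ℝ) ^ (Int.fract (Real.logb 10 x)) := by
  have h10 : (0:ℝ) < 10 := by norm_num
  rw [signif, if_neg hx.ne', abs_of_pos hx]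
  have hx' : x = (10 : ℝ) ^ (Real.logb 10 x) :=
    (Real.rpow_logb h10 (by norm_num) hx).symm
  set L := Real.logb 10 x with hL
  have hz : ((10:ℝ) ^ (-⌊L⌋) : ℝ) = (10:ℝ) ^ ((-⌊L⌋ : ℤ) : ℝ) :=
    (Real.rpow_intCast 10 (-⌊L⌋)).symm
  rw [hz]
  nth_rewrite 1 [hx']
  rw [← Real.rpow_add h10]
  congr 1
  push_cast
  rw [Int.fract]
  ring

/-- If `b > 10a > 0` and `c ∈ (0, b/10 − a)`, then `X_c = (a+c) · 10^U`
(with `U` uniform on `[0,1]`) has range contained in `[a, b]` and is Benford. -/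
theorem benford_with_range_in_Icc
    {Ω : Type*} [MeasurableSpace Ω] (μ : Measure Ω) [IsProbabilityMeasure μ]
    (a b : ℝ) (hab : 10 * a < b) (ha : 0 < 10 * a)
    (c : ℝ) (hc : c ∈ Set.Ioo 0 (b / 10 - a))
    (U : Ω → ℝ) (hU : Measurable U) (hunif : IsUniformOn μ U 0 1) :
    μ {ω | (a + c) * (10 : ℝ) ^ (U ω) ∈ Set.Icc a b} = 1 ∧
      IsBenford μ (fun ω => (a + c) * (10 : ℝ) ^ (U ω)) := by
  obtain ⟨hc0, hcb⟩ := hc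
  have ha0 : 0 < a := by linarith
  have hP : 0 < a + c := by linarith
  have hPb : 10 * (a + c) < b := by
    have h1 : a + c < b / 10 := by linarith
    have h2 := (lt_div_iff₀ (by norm_num : (0:ℝ) < 10)).mp h1
    linarith
  have h10 : (0:ℝ) < 10 := by norm_num
  have h110 : (1:ℝ) < 10 := by norm_num
  -- CDF on [0,1]
  have hcdf : ∀ x : ℝ, 0 ≤ x → x ≤ 1 → μ {ω | U ω ≤ x} = ENNReal.ofReal x := by
    intro x h0 h1
    have := hunif x ⟨h0, h1⟩
    simpa using this
  have hmeasIic : ∀ x : ℝ, MeasurableSet {ω | U ω ≤ x} := fun x => hU measurableSet_Iic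
  have hmeasIoc : ∀ x y : ℝ, MeasurableSet {ω | x < U ω ∧ U ω ≤ y} :=
    fun x y => hU measurableSet_Ioc
  -- measure of half-open intervals
  have hIoc : ∀ x y : ℝ, 0 ≤ x → x ≤ y → y ≤ 1 →
      μ {ω | x < U ω ∧ U ω ≤ y} = ENNReal.ofReal (y - x) := by
    intro x y h0 hxy h1
    have hset : {ω | x < U ω ∧ U ω ≤ y} = {ω | U ω ≤ y} \ {ω | U ω ≤ x} := by
      ext ω
      simp only [Set.mem_setOf_eq, Set.mem_diff, not_le]
      tauto
    have hss : {ω | U ω ≤ x} ⊆ {ω | U ω ≤ y} := fun ω (h : U ω ≤ x) => le_trans h hxy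
    rw [hset, measure_diff hss (hmeasIic x).nullMeasurableSet
        (measure_ne_top μ _), hcdf x h0 (le_trans hxy h1), hcdf y (le_trans h0 hxy) h1,
        ← ENNReal.ofReal_sub _ h0]
  -- atoms are null
  have hatom : ∀ p : ℝ, 0 < p → p ≤ 1 → μ {ω | U ω = p} = 0 := by
    intro p hp hp1
    have key : ∀ ε : ℝ, 0 < ε → ε ≤ p → μ {ω | U ω = p} ≤ ENNReal.ofReal ε := by
      intro ε hε hεp
      have hsub : {ω | U ω = p} ⊆ {ω | p - ε < U ω ∧ U ω ≤ p} := by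
        intro ω hω
        simp only [Set.mem_setOf_eq] at *
        constructor <;> linarith
      calc μ {ω | U ω = p} ≤ μ {ω | p - ε < U ω ∧ U ω ≤ p} := measure_mono hsub
        _ = ENNReal.ofReal (p - (p - ε)) := hIoc (p - ε) p (by linarith) (by linarith) hp1
        _ = ENNReal.ofReal ε := by ring_nf
    have hle : μ {ω | U ω = p} ≤ 0 := by
      refine ENNReal.le_of_forall_pos_le_add fun ε hε _ => ?_
      have hm : 0 < min (ε : ℝ) p := lt_min (by exact_mod_cast hε) hp
      calc μ {ω | U ω = p} ≤ ENNReal.ofReal (min (ε : ℝ) p) := key _ hm (min_le_right _ _)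
        _ ≤ ENNReal.ofReal (ε : ℝ) := ENNReal.ofReal_le_ofReal (min_le_left _ _)
        _ = (ε : ENNReal) := ENNReal.ofReal_coe_nnreal
        _ = 0 + ε := (zero_add _).symm
    exact le_antisymm hle zero_le
  -- the a.e. event F = {0 < U ≤ 1}
  set F : Set Ω := {ω | 0 < U ω ∧ U ω ≤ 1} with hF
  have hFmeas : MeasurableSet F := hU measurableSet_Ioc
  have hF1 : μ F = 1 := by
    have := hIoc 0 1 le_rfl zero_le_one le_rfl
    simpa using this
  have hFc : μ Fᶜ = 0 := by
    rw [measure_compl hFmeas (measure_ne_top μ _), hF1, measure_univ, tsub_self]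
  have hμinter : ∀ E : Set Ω, μ E = μ (E ∩ F) := by
    intro E
    refine le_antisymm ?_ (measure_mono Set.inter_subset_left)
    calc μ E ≤ μ ((E ∩ F) ∪ Fᶜ) := measure_mono (fun ω h => by
          by_cases hω : ω ∈ F
          · exact Or.inl ⟨h, hω⟩
          · exact Or.inr hω)
      _ ≤ μ (E ∩ F) + μ Fᶜ := measure_union_le _ _
      _ = μ (E ∩ F) := by rw [hFc, add_zero]
  have hunion_null : ∀ (A B : Set Ω), μ B = 0 → μ (A ∪ B) = μ A := by
    intro A B hB
    refine le_antisymm ?_ (measure_mono Set.subset_union_left)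
    calc μ (A ∪ B) ≤ μ A + μ B := measure_union_le _ _
      _ = μ A := by rw [hB, add_zero]
  -- positivity of X
  have hXpos : ∀ ω, 0 < (a + c) * (10 : ℝ) ^ (U ω) :=
    fun ω => mul_pos hP (Real.rpow_pos_of_pos h10 _)
  constructor
  · -- range statement
    have hsub : F ⊆ {ω | (a + c) * (10 : ℝ) ^ (U ω) ∈ Set.Icc a b} := by
      rintro ω ⟨hu0, hu1⟩
      have h1 : (1 : ℝ) ≤ (10:ℝ) ^ (U ω) := by
        have := Real.rpow_le_rpow_of_exponent_le (le_of_lt h110) (le_of_lt hu0)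
        simpa using this
      have h2 : (10:ℝ) ^ (U ω) ≤ 10 := by
        have := Real.rpow_le_rpow_of_exponent_le (le_of_lt h110) hu1
        simpa using this
      constructor
      · nlinarith
      · nlinarith
    refine le_antisymm prob_le_one ?_
    calc (1 : ENNReal) = μ F := hF1.symm
      _ ≤ _ := measure_mono hsub
  · -- Benford
    rintro t ⟨ht1, ht10⟩
    have ht0 : (0:ℝ) < t := by linarith
    set s := Real.logb 10 t with hs
    have hs0 : 0 ≤ s := Real.logb_nonneg h110 ht1
    have hs1 : s < 1 := by
      have := Real.logb_lt_logb h110 ht0 ht10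
      rwa [Real.logb_self_eq_one h110] at this
    set d := Real.logb 10 (a + c) with hd
    set θ := Int.fract d with hθ
    have hθ0 : 0 ≤ θ := Int.fract_nonneg d
    have hθ1 : θ < 1 := Int.fract_lt_one d
    -- fract values
    have hfr_lo : ∀ u : ℝ, 0 ≤ θ + u → θ + u < 1 → Int.fract (θ + u) = θ + u :=
      fun u h1 h2 => Int.fract_eq_self.2 ⟨h1, h2⟩
    have hfr_hi : ∀ u : ℝ, 1 ≤ θ + u → u ≤ 1 → Int.fract (θ + u) = θ + u - 1 := by
      intro u h1 h2
      have hrw : θ + u = ((1:ℤ) : ℝ) + (θ + u - 1) := by push_cast; ring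
      rw [hrw, Int.fract_intCast_add, Int.fract_eq_self.2 ⟨by linarith, by linarith⟩]
      push_cast
      ring
    -- pointwise characterization
    have hsig : ∀ ω, (signif |(a + c) * (10 : ℝ) ^ (U ω)| ≤ t ↔
        Int.fract (θ + U ω) ≤ s) := by
      intro ω
      rw [abs_of_pos (hXpos ω), signif_pos_eq (hXpos ω)]
      have hL : Real.logb 10 ((a + c) * (10 : ℝ) ^ (U ω)) = d + U ω := by
        rw [Real.logb_mul hP.ne' (Real.rpow_pos_of_pos h10 _).ne',
          Real.logb_rpow h10 (by norm_num)]
      rw [hL]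
      have hfr : Int.fract (d + U ω) = Int.fract (θ + U ω) := by
        conv_lhs => rw [← Int.floor_add_fract d, ← hθ, add_assoc]
        exact Int.fract_intCast_add _ _
      rw [hfr]
      constructor
      · intro h
        exact (Real.rpow_le_rpow_left_iff h110).mp
          (by rwa [Real.rpow_logb h10 (by norm_num) ht0])
      · intro h
        calc (10:ℝ) ^ (Int.fract (θ + U ω)) ≤ (10:ℝ) ^ s :=
            Real.rpow_le_rpow_of_exponent_le (le_of_lt h110) h
          _ = t := Real.rpow_logb h10 (by norm_num) ht0
    rw [hμinter]
    by_cases hcase : θ ≤ s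
    · -- event ∩ F = (0, s-θ] ∪ ((1-θ, 1] ∪ {1-θ})
      have hset : {ω | signif |(a + c) * (10 : ℝ) ^ (U ω)| ≤ t} ∩ F =
          {ω | 0 < U ω ∧ U ω ≤ s - θ} ∪
            ({ω | 1 - θ < U ω ∧ U ω ≤ 1} ∪ {ω | U ω = 1 - θ}) := by
        ext ω
        simp only [Set.mem_inter_iff, Set.mem_setOf_eq, Set.mem_union, hF, hsig ω]
        constructor
        · rintro ⟨hfr, hu0, hu1⟩
          by_cases h1 : θ + U ω < 1
          · rw [hfr_lo _ (by linarith) h1] at hfr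
            exact Or.inl ⟨hu0, by linarith⟩
          · push_neg at h1
            rcases lt_or_eq_of_le (by linarith : 1 - θ ≤ U ω) with h | h
            · exact Or.inr (Or.inl ⟨h, hu1⟩)
            · exact Or.inr (Or.inr h.symm)
        · rintro (⟨hu0, hus⟩ | ⟨hu1, hu2⟩ | heq)
          · refine ⟨?_, hu0, by linarith⟩
            rw [hfr_lo _ (by linarith) (by linarith)]
            linarith
          · refine ⟨?_, by linarith, hu2⟩
            rw [hfr_hi _ (by linarith) hu2]
            linarith
          · refine ⟨?_, by linarith, by linarith⟩
            rw [heq, hfr_hi _ (by linarith) (by linarith)]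
            linarith
      rw [hset]
      have hd1 : Disjoint {ω | 0 < U ω ∧ U ω ≤ s - θ}
          ({ω | 1 - θ < U ω ∧ U ω ≤ 1} ∪ {ω | U ω = 1 - θ}) := by
        rw [Set.disjoint_left]
        rintro ω ⟨h1, h2⟩ (⟨h3, _⟩ | (h3 : U ω = 1 - θ)) <;> linarith
      rw [measure_union hd1 (((hmeasIoc (1-θ) 1).union (hU (measurableSet_singleton _)))),
        hunion_null _ _ (hatom (1 - θ) (by linarith) (by linarith)),
        hIoc 0 (s - θ) le_rfl (by linarith) (by linarith),
        hIoc (1 - θ) 1 (by linarith) (by linarith) le_rfl,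
        ← ENNReal.ofReal_add (by linarith) (by linarith)]
      norm_num
    · push_neg at hcase
      have hset : {ω | signif |(a + c) * (10 : ℝ) ^ (U ω)| ≤ t} ∩ F =
          {ω | 1 - θ < U ω ∧ U ω ≤ s + 1 - θ} ∪ {ω | U ω = 1 - θ} := by
        ext ω
        simp only [Set.mem_inter_iff, Set.mem_setOf_eq, Set.mem_union, hF, hsig ω]
        constructor
        · rintro ⟨hfr, hu0, hu1⟩
          by_cases h1 : θ + U ω < 1
          · rw [hfr_lo _ (by linarith) h1] at hfr
            linarith
          · push_neg at h1
            rw [hfr_hi _ (by linarith) hu1] at hfr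
            rcases lt_or_eq_of_le (by linarith : 1 - θ ≤ U ω) with h | h
            · exact Or.inl ⟨h, by linarith⟩
            · exact Or.inr h.symm
        · rintro (⟨hu1, hu2⟩ | heq)
          · refine ⟨?_, by linarith, by linarith⟩
            rw [hfr_hi _ (by linarith) (by linarith)]
            linarith
          · refine ⟨?_, by linarith, by linarith⟩
            rw [heq, hfr_hi _ (by linarith) (by linarith)]
            linarith
      rw [hset, hunion_null _ _ (hatom (1 - θ) (by linarith) (by linarith)),
        hIoc (1 - θ) (s + 1 - θ) (by linarith) (by linarith) (by linarith)]
      norm_num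
end

section
/- Let a, b be real numbers with b > 10a > 0, and let c ∈ (0, b − 10a). Then the random variable Y_c uniformly distributed on [a + c, 10a + c] has range contained in [a, b] and is not Benford. -/
open MeasureTheory

lemma floor_logb_eq_of (m : ℤ) {y : ℝ} (h1 : (10:ℝ)^m ≤ y) (h2 : y < (10:ℝ)^m * 10) :
    ⌊Real.logb 10 y⌋ = m := by
  have h10 : (1:ℝ) < 10 := by norm_num
  have hy : 0 < y := lt_of_lt_of_le (zpow_pos (by norm_num) m) h1
  have hlo : (m:ℝ) ≤ Real.logb 10 y := by
    rw [Real.le_logb_iff_rpow_le h10 hy, Real.rpow_intCast]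
    exact h1
  have hhi : Real.logb 10 y < (m:ℝ) + 1 := by
    have : ((m:ℝ) + 1) = ((m + 1 : ℤ) : ℝ) := by push_cast; ring
    rw [this, Real.logb_lt_iff_lt_rpow h10 hy, Real.rpow_intCast,
      zpow_add_one₀ (by norm_num : (10:ℝ) ≠ 0)]
    exact h2
  exact Int.floor_eq_iff.mpr ⟨hlo, hhi⟩

lemma signif_eq_of (m : ℤ) {y : ℝ} (h0 : 0 < y) (h1 : (10:ℝ)^m ≤ y)
    (h2 : y < (10:ℝ)^m * 10) : signif y = y / (10:ℝ)^m := by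
  have hfl : ⌊Real.logb 10 y⌋ = m := floor_logb_eq_of m h1 h2
  rw [signif, if_neg (ne_of_gt h0), abs_of_pos h0, hfl, zpow_neg, div_eq_mul_inv]

set_option maxHeartbeats 2000000 in
/-- If `b > 10a > 0` and `c ∈ (0, b − 10a)`, then `Y_c` uniformly distributed
on `[a+c, 10a+c]` has range contained in `[a, b]` and is not Benford. -/
theorem uniform_in_Icc_not_benford
    {Ω : Type*} [MeasurableSpace Ω] (μ : Measure Ω) [IsProbabilityMeasure μ]
    (a b : ℝ) (hab : 10 * a < b) (ha : 0 < 10 * a)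
    (c : ℝ) (hc : c ∈ Set.Ioo 0 (b - 10 * a))
    (Y : Ω → ℝ) (hY : Measurable Y) (hunif : IsUniformOn μ Y (a + c) (10 * a + c)) :
    μ {ω | Y ω ∈ Set.Icc a b} = 1 ∧ ¬ IsBenford μ Y := by
  obtain ⟨hc0, hcb⟩ := hc
  have ha' : 0 < a := by linarith
  set L : ℝ := a + c with hLdef
  set R : ℝ := 10 * a + c with hRdef
  have hLpos : 0 < L := by positivity
  have hLR : L < R := by simp only [hLdef, hRdef]; linarith
  have hRLpos : 0 < R - L := by linarith
  have hR10L : R < 10 * L := by simp only [hLdef, hRdef]; linarith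
  have hRb : R < b := by simp only [hRdef]; linarith
  have haL : a < L := by simp only [hLdef]; linarith
  have h10 : (1:ℝ) < 10 := by norm_num
  -- basic measurability
  have mIic : ∀ x : ℝ, MeasurableSet {ω | Y ω ≤ x} := fun x => hY measurableSet_Iic
  have hF : ∀ x : ℝ, L ≤ x → x ≤ R →
      μ {ω | Y ω ≤ x} = ENNReal.ofReal ((x - L) / (R - L)) := fun x h1 h2 =>
    hunif x ⟨h1, h2⟩
  have hdiff : ∀ u v : ℝ, L ≤ u → u ≤ v → v ≤ R →
      μ ({ω | Y ω ≤ v} \ {ω | Y ω ≤ u}) = ENNReal.ofReal ((v - u) / (R - L)) := by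
    intro u v h1 h2 h3
    have hsub : {ω | Y ω ≤ u} ⊆ {ω | Y ω ≤ v} := fun ω hω => le_trans hω h2
    rw [measure_diff hsub (mIic u).nullMeasurableSet
      (measure_ne_top μ _), hF u h1 (le_trans h2 h3), hF v (le_trans h1 h2) h3]
    have heq : (v - u) / (R - L) = (v - L) / (R - L) - (u - L) / (R - L) := by
      rw [div_sub_div_same]; ring_nf
    rw [heq, ENNReal.ofReal_sub _ (div_nonneg (by linarith) (by linarith))]
  have hA1 : μ ({ω | Y ω ≤ R} \ {ω | Y ω ≤ L}) = 1 := by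
    rw [hdiff L R le_rfl hLR.le le_rfl, div_self (ne_of_gt hRLpos), ENNReal.ofReal_one]
  constructor
  · -- range part
    refine le_antisymm prob_le_one ?_
    rw [← hA1]
    apply measure_mono
    rintro ω ⟨h1, h2⟩
    simp only [Set.mem_setOf_eq, not_le] at h1 h2 ⊢
    exact ⟨le_of_lt (lt_trans haL h2), le_trans h1 hRb.le⟩
  · -- not Benford
    intro hB
    have hRpos : 0 < R := lt_trans hLpos hLR
    obtain ⟨k, hk1, hk2⟩ : ∃ k : ℤ, (10:ℝ)^k ≤ R ∧ R < (10:ℝ)^k * 10 := by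
      refine ⟨⌊Real.logb 10 R⌋, ?_, ?_⟩
      · rw [← Real.rpow_intCast]
        rw [← Real.le_logb_iff_rpow_le h10 hRpos]
        exact Int.floor_le _
      · have h := Int.lt_floor_add_one (Real.logb 10 R)
        have heq : ((⌊Real.logb 10 R⌋:ℝ) + 1) = ((⌊Real.logb 10 R⌋ + 1 : ℤ) : ℝ) := by
          push_cast; ring
        rw [heq, Real.logb_lt_iff_lt_rpow h10 hRpos, Real.rpow_intCast,
          zpow_add_one₀ (by norm_num : (10:ℝ) ≠ 0)] at h
        exact h
    have hPk : (0:ℝ) < (10:ℝ)^k := zpow_pos (by norm_num) k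
    by_cases hcase : (10:ℝ)^k ≤ L
    · -- Case A : no power of 10 inside (L, R]
      set t0 : ℝ := R / (10:ℝ)^k with ht0def
      have ht0a : 1 ≤ t0 := (one_le_div hPk).mpr hk1
      have ht0b : t0 < 10 := by rw [div_lt_iff₀ hPk]; linarith
      have hsub : {ω | Y ω ≤ R} \ {ω | Y ω ≤ L} ⊆ {ω | signif |Y ω| ≤ t0} := by
        rintro ω ⟨h1, h2⟩
        simp only [Set.mem_setOf_eq, not_le] at h1 h2 ⊢
        have hYpos : 0 < Y ω := lt_trans hLpos h2
        have habs : |Y ω| = Y ω := abs_of_pos hYpos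
        rw [habs, signif_eq_of k hYpos (le_trans hcase h2.le) (lt_of_le_of_lt h1 hk2)]
        exact (div_le_div_iff_of_pos_right hPk).mpr h1
      have hge : (1 : ENNReal) ≤ ENNReal.ofReal (Real.logb 10 t0) := by
        rw [← hB t0 ⟨ht0a, ht0b⟩, ← hA1]
        exact measure_mono hsub
      have hlt : Real.logb 10 t0 < 1 := by
        have h' : Real.logb 10 t0 < Real.logb 10 10 :=
          Real.logb_lt_logb h10 (by linarith) ht0b
        rwa [Real.logb_self_eq_one h10] at h'
      exact absurd hge (not_le.mpr (ENNReal.ofReal_lt_one.mpr hlt))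
    · -- Case B : a power of 10 inside (L, R]
      push_neg at hcase
      obtain ⟨P, hPdef⟩ : ∃ P : ℝ, P = (10:ℝ)^(k-1) := ⟨_, rfl⟩
      have hPpos : 0 < P := by rw [hPdef]; exact zpow_pos (by norm_num) _
      obtain ⟨Q, hQdef⟩ : ∃ Q : ℝ, Q = (10:ℝ)^k := ⟨_, rfl⟩
      rw [← hQdef] at hk1 hk2 hcase hPk
      have hQP : Q = P * 10 := by
        rw [hQdef, hPdef, ← zpow_add_one₀ (by norm_num : (10:ℝ) ≠ 0), sub_add_cancel]
      have hQpos : 0 < Q := hPk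
      have hPL : P < L := by nlinarith [hk1, hR10L, hQP]
      set s : ℝ := L / P with hsdef
      have hLs : L = s * P := by rw [hsdef, div_mul_cancel₀ L hPpos.ne']
      have hs1 : 1 < s := (one_lt_div hPpos).mpr hPL
      have hs10 : s < 10 := by
        rw [hsdef, div_lt_iff₀ hPpos]
        nlinarith [hcase, hQP]
      -- main equality on [s, 10)
      have key : ∀ t : ℝ, s ≤ t → t < 10 →
          Real.logb 10 t = (t * P - L + (R - Q)) / (R - L) := by
        intro t hts ht10
        set x : ℝ := t * P with hxdef
        have hx1 : L ≤ x := by rw [hLs, hxdef]; nlinarith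
        have hx2 : x < Q := by rw [hQP, hxdef]; nlinarith
        have hxR : x ≤ R := le_trans hx2.le hk1
        have ht1 : 1 ≤ t := le_trans hs1.le hts
        have htpos : 0 < t := by linarith
        have hlognn : 0 ≤ Real.logb 10 t := Real.logb_nonneg h10 ht1
        have hPx : P < x := lt_of_lt_of_le hPL hx1
        -- lower bound
        have hLB : (x - L + (R - Q)) / (R - L) ≤ Real.logb 10 t := by
          have hdisj : Disjoint ({ω | Y ω ≤ x} \ {ω | Y ω ≤ L})
              ({ω | Y ω ≤ R} \ {ω | Y ω ≤ Q}) := by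
            rw [Set.disjoint_left]
            rintro ω ⟨h1, _⟩ ⟨_, h4⟩
            simp only [Set.mem_setOf_eq, not_le] at h1 h4
            linarith
          have hsub2 : ({ω | Y ω ≤ x} \ {ω | Y ω ≤ L}) ∪
              ({ω | Y ω ≤ R} \ {ω | Y ω ≤ Q}) ⊆ {ω | signif |Y ω| ≤ t} := by
            rintro ω (⟨h1, h2⟩ | ⟨h1, h2⟩) <;>
              simp only [Set.mem_setOf_eq, not_le] at h1 h2 ⊢
            · have hYpos : 0 < Y ω := lt_trans hLpos h2
              rw [abs_of_pos hYpos,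
                signif_eq_of (k-1) hYpos (by rw [← hPdef]; nlinarith)
                  (by rw [← hPdef, ← hQP]; linarith), ← hPdef]
              rw [div_le_iff₀ hPpos]; linarith
            · have hYpos : 0 < Y ω := lt_trans hQpos h2
              rw [abs_of_pos hYpos,
                signif_eq_of k hYpos (by rw [← hQdef]; exact h2.le)
                  (by rw [← hQdef]; exact lt_of_le_of_lt h1 hk2), ← hQdef]
              rw [div_le_iff₀ hQpos, hQP]
              nlinarith
          have hm : μ (({ω | Y ω ≤ x} \ {ω | Y ω ≤ L}) ∪
              ({ω | Y ω ≤ R} \ {ω | Y ω ≤ Q})) =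
              ENNReal.ofReal ((x - L) / (R - L)) + ENNReal.ofReal ((R - Q) / (R - L)) := by
            rw [measure_union hdisj ((mIic R).diff (mIic Q)),
              hdiff L x le_rfl hx1 hxR, hdiff Q R hcase.le hk1 le_rfl]
          have hle : ENNReal.ofReal ((x - L) / (R - L)) + ENNReal.ofReal ((R - Q) / (R - L))
              ≤ ENNReal.ofReal (Real.logb 10 t) := by
            rw [← hm, ← hB t ⟨ht1, ht10⟩]
            exact measure_mono hsub2
          rw [← ENNReal.ofReal_add (div_nonneg (by linarith) hRLpos.le)
            (div_nonneg (by linarith [hk1]) hRLpos.le),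
            ENNReal.ofReal_le_ofReal_iff hlognn] at hle
          calc (x - L + (R - Q)) / (R - L)
              = (x - L) / (R - L) + (R - Q) / (R - L) := by rw [← add_div]
            _ ≤ Real.logb 10 t := hle
        -- upper bound
        have hUB : Real.logb 10 t ≤ (x - L + (R - Q)) / (R - L) := by
          by_contra hcon
          push_neg at hcon
          set ε : ℝ := (Real.logb 10 t - (x - L + (R - Q)) / (R - L)) / 2 with hε
          have hεpos : 0 < ε := by simp only [hε]; linarith
          set y : ℝ := max L (Q - ε * (R - L)) with hydef
          have hyL : L ≤ y := le_max_left _ _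
          have hyQ : y < Q := by
            apply max_lt hcase
            nlinarith
          have hyR : y ≤ R := le_trans hyQ.le hk1
          have hsub3 : {ω | signif |Y ω| ≤ t} ⊆ {ω | Y ω ≤ x} ∪
              ({ω | Y ω ≤ R} \ {ω | Y ω ≤ y}) ∪
              ({ω | Y ω ≤ R} \ {ω | Y ω ≤ L})ᶜ := by
            intro ω hω
            simp only [Set.mem_setOf_eq] at hω
            by_cases hin : ω ∈ {ω | Y ω ≤ R} \ {ω | Y ω ≤ L}
            · obtain ⟨h1, h2⟩ := hin
              simp only [Set.mem_setOf_eq, not_le] at h1 h2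
              by_cases hx' : Y ω ≤ x
              · exact Or.inl (Or.inl hx')
              · push_neg at hx'
                have hYpos : 0 < Y ω := lt_trans hLpos h2
                have hQY : Q ≤ Y ω := by
                  by_contra hQY
                  push_neg at hQY
                  rw [abs_of_pos hYpos, signif_eq_of (k-1) hYpos
                    (by rw [← hPdef]; nlinarith) (by rw [← hPdef, ← hQP]; linarith),
                    ← hPdef] at hω
                  rw [div_le_iff₀ hPpos] at hω
                  rw [hxdef] at hx'
                  linarith
                refine Or.inl (Or.inr ⟨h1, ?_⟩)
                simp only [Set.mem_setOf_eq, not_le]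
                exact lt_of_lt_of_le hyQ hQY
            · exact Or.inr hin
          have hcompl : μ (({ω | Y ω ≤ R} \ {ω | Y ω ≤ L})ᶜ) = 0 := by
            rw [measure_compl ((mIic R).diff (mIic L)) (measure_ne_top μ _), hA1,
              measure_univ, tsub_self]
          have hm2 : μ {ω | signif |Y ω| ≤ t} ≤
              ENNReal.ofReal ((x - L) / (R - L)) + ENNReal.ofReal ((R - y) / (R - L)) := by
            calc μ {ω | signif |Y ω| ≤ t}
                ≤ μ ({ω | Y ω ≤ x} ∪ ({ω | Y ω ≤ R} \ {ω | Y ω ≤ y}) ∪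
                  ({ω | Y ω ≤ R} \ {ω | Y ω ≤ L})ᶜ) := measure_mono hsub3
              _ ≤ μ ({ω | Y ω ≤ x} ∪ ({ω | Y ω ≤ R} \ {ω | Y ω ≤ y})) +
                  μ (({ω | Y ω ≤ R} \ {ω | Y ω ≤ L})ᶜ) := measure_union_le _ _
              _ = μ ({ω | Y ω ≤ x} ∪ ({ω | Y ω ≤ R} \ {ω | Y ω ≤ y})) := by
                  rw [hcompl, add_zero]
              _ ≤ μ {ω | Y ω ≤ x} + μ ({ω | Y ω ≤ R} \ {ω | Y ω ≤ y}) :=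
                  measure_union_le _ _
              _ = ENNReal.ofReal ((x - L) / (R - L)) +
                  ENNReal.ofReal ((R - y) / (R - L)) := by
                  rw [hF x hx1 hxR, hdiff y R hyL hyR le_rfl]
          rw [hB t ⟨ht1, ht10⟩, ← ENNReal.ofReal_add (div_nonneg (by linarith) hRLpos.le)
            (div_nonneg (by linarith) hRLpos.le),
            ENNReal.ofReal_le_ofReal_iff
              (add_nonneg (div_nonneg (by linarith) hRLpos.le) (div_nonneg (by linarith) hRLpos.le))] at hm2
          have hyge : Q - ε * (R - L) ≤ y := le_max_right _ _
          have hfin : (x - L) / (R - L) + (R - y) / (R - L) ≤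
              (x - L + (R - Q)) / (R - L) + ε := by
            rw [← add_div]
            have h1 : x - L + (R - y) ≤ (x - L + (R - Q)) + ε * (R - L) := by linarith
            calc (x - L + (R - y)) / (R - L)
                ≤ ((x - L + (R - Q)) + ε * (R - L)) / (R - L) :=
                  (div_le_div_iff_of_pos_right hRLpos).mpr h1
              _ = (x - L + (R - Q)) / (R - L) + ε := by
                  rw [add_div, mul_div_assoc, div_self (ne_of_gt hRLpos), mul_one]
          have : Real.logb 10 t ≤ (x - L + (R - Q)) / (R - L) + ε := le_trans hm2 hfin
          simp only [hε] at this
          linarith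
        linarith [le_antisymm hUB hLB]
      -- three-point contradiction with strict concavity of log
      set t1 : ℝ := s with ht1def
      set t3 : ℝ := (s + 10) / 2 with ht3def
      set t2 : ℝ := (t1 + t3) / 2 with ht2def
      have ht3a : s ≤ t3 := by rw [ht3def]; linarith
      have ht3b : t3 < 10 := by rw [ht3def]; linarith
      have ht2a : s ≤ t2 := by rw [ht2def]; simp only [ht1def]; linarith
      have ht2b : t2 < 10 := by rw [ht2def]; simp only [ht1def]; linarith
      have e1 := key t1 le_rfl hs10
      have e2 := key t2 ht2a ht2b
      have e3 := key t3 ht3a ht3b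
      have hmid : Real.logb 10 t2 = (Real.logb 10 t1 + Real.logb 10 t3) / 2 := by
        rw [e1, e2, e3, ht2def]
        field_simp
        ring
      have ht1pos : 0 < t1 := by rw [ht1def]; linarith
      have ht3pos : 0 < t3 := by rw [ht3def]; linarith
      have hne : t1 ≠ t3 := by
        rw [ht1def, ht3def]; intro h; linarith
      have hconc := strictConcaveOn_log_Ioi.2 (Set.mem_Ioi.mpr ht1pos)
        (Set.mem_Ioi.mpr ht3pos) hne one_half_pos one_half_pos (by norm_num)
      simp only [smul_eq_mul] at hconc
      have ht2eq : (1:ℝ)/2 * t1 + (1:ℝ)/2 * t3 = t2 := by rw [ht2def]; ring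
      rw [ht2eq] at hconc
      have hlog10pos : 0 < Real.log 10 := Real.log_pos h10
      rw [Real.logb, Real.logb, Real.logb] at hmid
      have hne10 : Real.log 10 ≠ 0 := hlog10pos.ne'
      field_simp at hmid
      have hh := mul_lt_mul_of_pos_right hconc hlog10pos
      linarith [hmid, hh]
end

section
/- Benford's law is scale-invariant: if X is a Benford random variable and s > 0 is a real constant, then the random variable sX is also Benford. -/
open MeasureTheory

lemma signif_eq_rpow {x : ℝ} (hx : x ≠ 0) :
    signif x = (10:ℝ) ^ (Int.fract (Real.logb 10 |x|)) := by
  have hax : 0 < |x| := abs_pos.mpr hx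
  rw [signif, if_neg hx, Int.fract, Real.rpow_sub (by norm_num),
    Real.rpow_logb (by norm_num) (by norm_num) hax, Real.rpow_intCast]
  rw [div_eq_mul_inv, ← zpow_neg]

lemma signif_le_iff {x t : ℝ} (hx : x ≠ 0) (ht : 0 < t) :
    signif x ≤ t ↔ Int.fract (Real.logb 10 |x|) ≤ Real.logb 10 t := by
  rw [signif_eq_rpow hx]
  nth_rewrite 1 [← Real.rpow_logb (show (0:ℝ)<10 by norm_num) (by norm_num) ht]
  exact Real.rpow_le_rpow_left_iff (by norm_num)

lemma fract_add_fract (a b : ℝ) :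
    Int.fract (Int.fract a + Int.fract b) = Int.fract (a + b) := by
  have h : Int.fract a + Int.fract b = (a + b) - ((⌊a⌋ + ⌊b⌋ : ℤ) : ℝ) := by
    push_cast; rw [Int.fract, Int.fract]; ring
  rw [h, Int.fract_sub_intCast]


/-- Benford's law is scale-invariant: if `X` is Benford and `s > 0`,
then `s·X` is also Benford. -/
theorem benford_scale_invariant
    {Ω : Type*} [MeasurableSpace Ω] (μ : Measure Ω) [IsProbabilityMeasure μ]
    (X : Ω → ℝ) (hX : Measurable X) (hben : IsBenford μ X)
    (s : ℝ) (hs : 0 < s) :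
    IsBenford μ (fun ω => s * X ω) := by
  intro t ht
  obtain ⟨ht1, ht2⟩ := ht
  have ht0 : (0:ℝ) < t := by linarith
  set Y : Ω → ℝ := fun ω => Int.fract (Real.logb 10 |X ω|) with hYdef
  have hYmeas : Measurable Y := by
    apply Measurable.comp measurable_fract
    have : (fun ω => Real.logb 10 |X ω|) = fun ω => Real.log |X ω| / Real.log 10 := by
      funext ω; rfl
    rw [this]
    exact (Real.measurable_log.comp hX.abs).div_const _
  have hY0 : ∀ ω, 0 ≤ Y ω := fun ω => Int.fract_nonneg _
  have hY1 : ∀ ω, Y ω < 1 := fun ω => Int.fract_lt_one _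
  set τ := Real.logb 10 t with hτdef
  have hτ0 : 0 ≤ τ := Real.logb_nonneg (by norm_num) ht1
  have hτ1 : τ < 1 := by
    have : Real.logb 10 t < Real.logb 10 10 :=
      Real.logb_lt_logb (by norm_num) ht0 ht2
    simpa using this
  set α := Int.fract (Real.logb 10 s) with hαdef
  have hα0 : 0 ≤ α := Int.fract_nonneg _
  have hα1 : α < 1 := Int.fract_lt_one _
  -- CDF of Y
  have hle : ∀ c : ℝ, 0 ≤ c → c < 1 → μ {ω | Y ω ≤ c} = ENNReal.ofReal c := by
    intro c hc0 hc1
    have h10 : (0:ℝ) < 10 := by norm_num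
    have htc0 : (0:ℝ) < (10:ℝ) ^ c := Real.rpow_pos_of_pos h10 c
    have htc1 : (1:ℝ) ≤ (10:ℝ) ^ c := by
      have := Real.rpow_le_rpow_left_iff (x := (10:ℝ)) (y := 0) (z := c) (by norm_num)
      simpa [Real.rpow_zero] using this.mpr hc0
    have htc2 : (10:ℝ) ^ c < 10 := by
      have := Real.rpow_lt_rpow_left_iff (x := (10:ℝ)) (y := c) (z := 1) (by norm_num)
      simpa [Real.rpow_one] using this.mpr hc1
    have := hben ((10:ℝ) ^ c) ⟨htc1, htc2⟩
    have hseteq : {ω | signif |X ω| ≤ (10:ℝ) ^ c} = {ω | Y ω ≤ c} := by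
      ext ω
      simp only [Set.mem_setOf_eq]
      by_cases hx : X ω = 0
      · have hl : signif |X ω| ≤ (10:ℝ) ^ c := by
          rw [hx, abs_zero, signif, if_pos rfl]; linarith
        have hr : Y ω ≤ c := by
          rw [hYdef]; simp [hx, Real.logb_zero]; exact hc0
        simp [hl, hr]
      · rw [signif_le_iff (abs_ne_zero.mpr hx) htc0, abs_abs,
          Real.logb_rpow (by norm_num) (by norm_num)]
    rw [hseteq, Real.logb_rpow (by norm_num) (by norm_num)] at this
    exact this
  -- no atoms in (0,1)
  have hatom : ∀ c : ℝ, 0 < c → c < 1 → μ {ω | Y ω = c} = 0 := by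
    intro c hc0 hc1
    refine le_antisymm ?_ zero_le
    refine ENNReal.le_of_forall_pos_le_add fun ε hε _ => ?_
    rw [zero_add]
    set c' := max 0 (c - (ε:ℝ)) with hc'def
    have hc'0 : 0 ≤ c' := le_max_left _ _
    have hc'lt : c' < c := by
      rw [hc'def]; apply max_lt hc0; have : (0:ℝ) < ε := hε; linarith
    have hmeasB : MeasurableSet {ω | Y ω = c} :=
      hYmeas (measurableSet_singleton c)
    have hdisj : Disjoint {ω | Y ω ≤ c'} {ω | Y ω = c} := by
      rw [Set.disjoint_left]
      intro ω h1 h2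
      simp only [Set.mem_setOf_eq] at h1 h2
      rw [h2] at h1; linarith
    have hsub : {ω | Y ω ≤ c'} ∪ {ω | Y ω = c} ⊆ {ω | Y ω ≤ c} := by
      rintro ω (h | h) <;> simp only [Set.mem_setOf_eq] at *
      · linarith
      · linarith [h.le]
    have h1 : μ {ω | Y ω ≤ c'} + μ {ω | Y ω = c} ≤ ENNReal.ofReal c := by
      rw [← measure_union hdisj hmeasB]
      rw [← hle c hc0.le hc1]
      exact measure_mono hsub
    rw [hle c' hc'0 (lt_trans hc'lt hc1)] at h1
    have h2 : ENNReal.ofReal c ≤ ENNReal.ofReal c' + ENNReal.ofReal (c - c') := by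
      rw [← ENNReal.ofReal_add hc'0 (by linarith)]
      exact ENNReal.ofReal_le_ofReal (by linarith)
    have h3 : μ {ω | Y ω = c} ≤ ENNReal.ofReal (c - c') := by
      have := le_trans h1 h2
      rwa [ENNReal.add_le_add_iff_left ENNReal.ofReal_ne_top] at this
    refine le_trans h3 ?_
    have : c - c' ≤ (ε:ℝ) := by
      rw [hc'def]
      have := le_max_right 0 (c - (ε:ℝ)); linarith
    calc ENNReal.ofReal (c - c') ≤ ENNReal.ofReal (ε:ℝ) := ENNReal.ofReal_le_ofReal this
      _ = (ε : ENNReal) := ENNReal.ofReal_coe_nnreal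
  -- strict CDF
  have hlt : ∀ c : ℝ, 0 < c → c ≤ 1 → μ {ω | Y ω < c} = ENNReal.ofReal c := by
    intro c hc0 hc1
    rcases lt_or_eq_of_le hc1 with hc1' | hc1'
    · have : {ω | Y ω < c} = {ω | Y ω ≤ c} \ {ω | Y ω = c} := by
        ext ω; simp only [Set.mem_setOf_eq, Set.mem_diff]
        constructor
        · intro h; exact ⟨h.le, ne_of_lt h⟩
        · intro ⟨h1, h2⟩; exact lt_of_le_of_ne h1 h2
      rw [this, measure_diff_null (hatom c hc0 hc1'), hle c hc0.le hc1']
    · subst hc1'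
      have : {ω | Y ω < 1} = Set.univ := by
        ext ω; simp [hY1 ω]
      rw [this, measure_univ]; simp
  -- pointwise characterization
  have hpt : ∀ ω, X ω ≠ 0 →
      (signif |s * X ω| ≤ t ↔ (Y ω ≤ τ - α ∨ (1 - α ≤ Y ω ∧ Y ω ≤ 1 + τ - α))) := by
    intro ω hx
    have hsx : |s * X ω| ≠ 0 := abs_ne_zero.mpr (mul_ne_zero (ne_of_gt hs) hx)
    rw [signif_le_iff hsx ht0, abs_abs]
    have hfr : Int.fract (Real.logb 10 |s * X ω|) = Int.fract (α + Y ω) := by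
      have h1 : |s * X ω| = s * |X ω| := by rw [abs_mul, abs_of_pos hs]
      rw [h1, Real.logb_mul (ne_of_gt hs) (abs_ne_zero.mpr hx), hαdef, hYdef,
        fract_add_fract]
    rw [hfr, ← hτdef]
    have hY0' := hY0 ω
    have hY1' := hY1 ω
    by_cases hc : α + Y ω < 1
    · rw [Int.fract_eq_self.mpr ⟨by linarith, hc⟩]
      constructor
      · intro h; exact Or.inl (by linarith)
      · rintro (h | ⟨h1, h2⟩)
        · linarith
        · linarith
    · push_neg at hc
      have hfr2 : Int.fract (α + Y ω) = α + Y ω - 1 := by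
        have := Int.fract_sub_intCast (α + Y ω) 1
        rw [show ((1:ℤ):ℝ) = (1:ℝ) by norm_num] at this
        rw [← this, Int.fract_eq_self.mpr ⟨by linarith, by linarith⟩]
      rw [hfr2]
      constructor
      · intro h; exact Or.inr ⟨by linarith, by linarith⟩
      · rintro (h | ⟨h1, h2⟩)
        · linarith
        · linarith
  -- null set where X = 0
  have hZ : μ {ω | X ω = 0} = 0 := by
    have h1 := hben 1 ⟨le_refl _, by norm_num⟩
    rw [Real.logb_one] at h1
    simp only [ENNReal.ofReal_zero] at h1
    refine measure_mono_null ?_ h1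
    intro ω hω
    simp only [Set.mem_setOf_eq] at *
    rw [hω, abs_zero, signif, if_pos rfl]; norm_num
  -- set decomposition
  have hset : {ω | signif |(fun ω => s * X ω) ω| ≤ t} =
      ({ω | Y ω ≤ τ - α} ∪ {ω | 1 - α ≤ Y ω ∧ Y ω ≤ 1 + τ - α}) ∪ {ω | X ω = 0} := by
    ext ω
    simp only [Set.mem_setOf_eq, Set.mem_union]
    by_cases hx : X ω = 0
    · have hl : signif |s * X ω| ≤ t := by
        rw [hx, mul_zero, abs_zero, signif, if_pos rfl]; linarith
      exact iff_of_true hl (Or.inr hx)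
    · rw [hpt ω hx]; tauto
  rw [hset]
  have hcut : ∀ S : Set Ω, μ (S ∪ {ω | X ω = 0}) = μ S := fun S =>
    le_antisymm ((measure_union_le _ _).trans_eq (by rw [hZ, add_zero]))
      (measure_mono Set.subset_union_left)
  rw [hcut]
  -- measure computation
  by_cases hcase : α ≤ τ
  · -- B = {1 - α ≤ Y}
    have hB : {ω | 1 - α ≤ Y ω ∧ Y ω ≤ 1 + τ - α} = {ω | 1 - α ≤ Y ω} := by
      ext ω; simp only [Set.mem_setOf_eq]
      constructor
      · exact fun h => h.1
      · intro h; exact ⟨h, by linarith [hY1 ω]⟩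
    rw [hB]
    have hdisj : Disjoint {ω | Y ω ≤ τ - α} {ω | 1 - α ≤ Y ω} := by
      rw [Set.disjoint_left]
      intro ω h1 h2
      simp only [Set.mem_setOf_eq] at h1 h2
      linarith
    have hmeasB : MeasurableSet {ω | 1 - α ≤ Y ω} :=
      measurableSet_le measurable_const hYmeas
    rw [measure_union hdisj hmeasB]
    have hA : μ {ω | Y ω ≤ τ - α} = ENNReal.ofReal (τ - α) :=
      hle _ (by linarith) (by linarith)
    have hBc : {ω | 1 - α ≤ Y ω} = {ω | Y ω < 1 - α}ᶜ := by
      ext ω; simp only [Set.mem_setOf_eq, Set.mem_compl_iff, not_lt]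
    have hBm : μ {ω | 1 - α ≤ Y ω} = 1 - ENNReal.ofReal (1 - α) := by
      rw [hBc, measure_compl (measurableSet_lt hYmeas measurable_const)
        (measure_ne_top μ _), measure_univ, hlt (1 - α) (by linarith) (by linarith)]
    rw [hA, hBm]
    have h1 : (1:ENNReal) - ENNReal.ofReal (1 - α) = ENNReal.ofReal α := by
      rw [← ENNReal.ofReal_one, ← ENNReal.ofReal_sub _ (by linarith)]
      norm_num
    rw [h1, ← ENNReal.ofReal_add (by linarith) hα0]
    congr 1; ring
  · push_neg at hcase
    have hα0' : 0 < α := lt_of_le_of_lt hτ0 hcase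
    have hA : {ω | Y ω ≤ τ - α} = ∅ := by
      ext ω; simp only [Set.mem_setOf_eq, Set.mem_empty_iff_false, iff_false, not_le]
      have := hY0 ω; linarith
    rw [hA, Set.empty_union]
    have hB : {ω | 1 - α ≤ Y ω ∧ Y ω ≤ 1 + τ - α} =
        {ω | Y ω ≤ 1 + τ - α} \ {ω | Y ω < 1 - α} := by
      ext ω; simp only [Set.mem_setOf_eq, Set.mem_diff, not_lt]
      tauto
    rw [hB, measure_diff ?_ ?_ ?_]
    · rw [hle (1 + τ - α) (by linarith) (by linarith),
        hlt (1 - α) (by linarith) (by linarith),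
        ← ENNReal.ofReal_sub _ (by linarith)]
      congr 1; ring
    · intro ω h
      simp only [Set.mem_setOf_eq] at *
      linarith
    · exact (measurableSet_lt hYmeas measurable_const).nullMeasurableSet
    · exact measure_ne_top μ _
end

section
/- No uniformly distributed random variable is Benford: for all real numbers a < b, the random variable U[a,b] uniformly distributed on [a,b] is not Benford. -/
open MeasureTheory

/-! ### Auxiliary lemmas -/

lemma ten_zpow_pos (k : ℤ) : (0:ℝ) < (10:ℝ) ^ k := zpow_pos (by norm_num) k

lemma one_le_aux {x : ℝ} {k : ℤ} (h : (10:ℝ) ^ k ≤ x) : 1 ≤ x * (10:ℝ) ^ (-k) := by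
  have hp : (0:ℝ) < (10:ℝ) ^ (-k) := ten_zpow_pos _
  calc (1:ℝ) = (10:ℝ) ^ k * (10:ℝ) ^ (-k) := by
        rw [← zpow_add₀ (by norm_num : (10:ℝ) ≠ 0)]; simp
    _ ≤ x * (10:ℝ) ^ (-k) := mul_le_mul_of_nonneg_right h hp.le

lemma one_lt_aux {x : ℝ} {k : ℤ} (h : (10:ℝ) ^ k < x) : 1 < x * (10:ℝ) ^ (-k) := by
  have hp : (0:ℝ) < (10:ℝ) ^ (-k) := ten_zpow_pos _
  calc (1:ℝ) = (10:ℝ) ^ k * (10:ℝ) ^ (-k) := by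
        rw [← zpow_add₀ (by norm_num : (10:ℝ) ≠ 0)]; simp
    _ < x * (10:ℝ) ^ (-k) := mul_lt_mul_of_pos_right h hp

lemma lt_ten_aux {x : ℝ} {k : ℤ} (h : x < (10:ℝ) ^ (k+1)) : x * (10:ℝ) ^ (-k) < 10 := by
  have hp : (0:ℝ) < (10:ℝ) ^ (-k) := ten_zpow_pos _
  calc x * (10:ℝ) ^ (-k) < (10:ℝ) ^ (k+1) * (10:ℝ) ^ (-k) := mul_lt_mul_of_pos_right h hp
    _ = 10 := by rw [← zpow_add₀ (by norm_num : (10:ℝ) ≠ 0)]; norm_num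

lemma signif_of_mem {x : ℝ} {k : ℤ} (h1 : (10:ℝ) ^ k ≤ x) (h2 : x < (10:ℝ) ^ (k+1)) :
    signif x = x * (10:ℝ) ^ (-k) := by
  have hx : 0 < x := lt_of_lt_of_le (ten_zpow_pos k) h1
  have hfl : ⌊Real.logb 10 x⌋ = k := by
    rw [Int.floor_eq_iff]
    constructor
    · rw [Real.le_logb_iff_rpow_le (by norm_num) hx, Real.rpow_intCast]
      exact h1
    · rw [Real.logb_lt_iff_lt_rpow (by norm_num) hx,
        show ((k:ℝ) + 1) = ((k+1 : ℤ) : ℝ) by push_cast; ring, Real.rpow_intCast]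
      exact h2
  rw [signif, if_neg hx.ne', abs_of_pos hx, hfl]

lemma logb_mul_zpow {x : ℝ} (hx : 0 < x) (k : ℤ) :
    Real.logb 10 (x * (10:ℝ) ^ (-k)) = Real.logb 10 x - k := by
  rw [Real.logb_mul hx.ne' (ten_zpow_pos (-k)).ne', ← Real.rpow_intCast,
    Real.logb_rpow (by norm_num) (by norm_num)]
  push_cast
  ring

lemma logb_sub_lt {p q Lba : ℝ} (hp0 : 0 < p) (hpq : p < q) (hba : 0 < Lba)
    (h : Lba < p * Real.log 10) :
    Real.logb 10 q - Real.logb 10 p < (q - p) / Lba := by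
  have hq0 : 0 < q := hp0.trans hpq
  have hL0 : 0 < Real.log 10 := by
    have := Real.log_pos (by norm_num : (1:ℝ) < 10); linarith
  have h1 : Real.logb 10 q - Real.logb 10 p = Real.log (q/p) / Real.log 10 := by
    rw [Real.logb, Real.logb, Real.log_div hq0.ne' hp0.ne', sub_div]
  have h2 : Real.log (q/p) ≤ (q - p) / p := by
    have h3 := Real.log_le_sub_one_of_pos (show 0 < q/p by positivity)
    have h4 : q/p - 1 = (q - p)/p := by field_simp
    linarith
  rw [h1]
  calc Real.log (q/p) / Real.log 10 ≤ ((q - p)/p) / Real.log 10 := by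
        gcongr
    _ = (q - p) / (p * Real.log 10) := by rw [div_div]
    _ < (q - p) / Lba := div_lt_div_of_pos_left (by linarith) hba h

/-- The key contradiction lemma: if `Y` is uniform on `[a,b]` and Benford, and we can
find `(c,d] ⊆ [a,b]` whose significands lie in `(s,t]` with
`log t - log s < (d-c)/(b-a)`, we get `False`. -/
lemma benford_uniform_key {Ω : Type*} [MeasurableSpace Ω] (μ : Measure Ω)
    [IsProbabilityMeasure μ]
    (a b : ℝ) (hab : a < b) (Y : Ω → ℝ) (hY : Measurable Y)
    (hunif : IsUniformOn μ Y a b) (hben : IsBenford μ Y)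
    (c d s t : ℝ) (hac : a ≤ c) (hcd : c < d) (hdb : d ≤ b)
    (hs : s ∈ Set.Ico (1:ℝ) 10) (ht : t ∈ Set.Ico (1:ℝ) 10) (hst : s ≤ t)
    (hmem : ∀ x, c < x → x ≤ d → s < signif |x| ∧ signif |x| ≤ t)
    (hlt : Real.logb 10 t - Real.logb 10 s < (d - c) / (b - a)) : False := by
  have hba : (0:ℝ) < b - a := by linarith
  set E : Set Ω := {ω | c < Y ω ∧ Y ω ≤ d} with hEdef
  have hEmeas : MeasurableSet E := by
    have : E = Y ⁻¹' (Set.Ioc c d) := rfl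
    rw [this]; exact hY measurableSet_Ioc
  have hμc := hunif c ⟨hac, le_trans hcd.le hdb⟩
  have hμd := hunif d ⟨le_trans hac hcd.le, hdb⟩
  have hsplit : μ {ω | Y ω ≤ d} = μ {ω | Y ω ≤ c} + μ E := by
    rw [← measure_union _ hEmeas]
    · congr 1
      ext ω
      simp only [hEdef, Set.mem_setOf_eq, Set.mem_union]
      constructor
      · intro h
        by_cases h' : Y ω ≤ c
        · exact Or.inl h'
        · exact Or.inr ⟨lt_of_not_ge h', h⟩
      · rintro (h | ⟨_, h⟩)
        · exact le_trans h hcd.le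
        · exact h
    · rw [Set.disjoint_left]
      rintro ω h ⟨h1, _⟩
      exact absurd h1 (not_lt.2 h)
  have hE : μ E = ENNReal.ofReal ((d - c) / (b - a)) := by
    rw [hμc, hμd] at hsplit
    have h1 : (d - a)/(b-a) = (c-a)/(b-a) + (d-c)/(b-a) := by ring
    rw [h1, ENNReal.ofReal_add (div_nonneg (by linarith) hba.le)
      (div_nonneg (by linarith) hba.le)] at hsplit
    exact ((ENNReal.add_right_inj ENNReal.ofReal_ne_top).mp hsplit).symm
  have hB := hben s hs
  have hA := hben t ht
  have hsub : {ω | signif |Y ω| ≤ s} ∪ E ⊆ {ω | signif |Y ω| ≤ t} := by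
    rintro ω (h | ⟨h1, h2⟩)
    · exact le_trans h hst
    · exact (hmem _ h1 h2).2
  have hdisj : Disjoint {ω | signif |Y ω| ≤ s} E := by
    rw [Set.disjoint_left]
    rintro ω h ⟨h1, h2⟩
    exact absurd h (not_le.2 (hmem _ h1 h2).1)
  have hle : μ {ω | signif |Y ω| ≤ s} + μ E ≤ μ {ω | signif |Y ω| ≤ t} := by
    rw [← measure_union hdisj hEmeas]
    exact measure_mono hsub
  rw [hB, hA, hE, ← ENNReal.ofReal_add (Real.logb_nonneg (by norm_num) hs.1)
    (div_nonneg (by linarith) hba.le)] at hle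
  have := (ENNReal.ofReal_le_ofReal_iff (Real.logb_nonneg (by norm_num) ht.1)).mp hle
  linarith

/-- No uniformly distributed random variable is Benford: for all `a < b`,
a random variable uniform on `[a,b]` is not Benford. -/
theorem uniform_not_benford
    {Ω : Type*} [MeasurableSpace Ω] (μ : Measure Ω) [IsProbabilityMeasure μ]
    (a b : ℝ) (hab : a < b)
    (Y : Ω → ℝ) (hY : Measurable Y) (hunif : IsUniformOn μ Y a b) :
    ¬ IsBenford μ Y := by
  intro hben
  have hba : (0:ℝ) < b - a := by linarith
  have hL : (2:ℝ) < Real.log 10 := by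
    have he : Real.exp 2 < 10 := by
      have h1 : Real.exp 2 = Real.exp 1 * Real.exp 1 := by
        rw [← Real.exp_add]; norm_num
      nlinarith [Real.exp_one_lt_d9, Real.exp_pos 1]
    calc (2:ℝ) = Real.log (Real.exp 2) := (Real.log_exp 2).symm
      _ < Real.log 10 := Real.log_lt_log (Real.exp_pos 2) he
  have hL0 : (0:ℝ) < Real.log 10 := by linarith
  by_cases hcase : b - a < b * Real.log 10
  · -- use an interval near b, on the positive side
    have hb0 : 0 < b := by nlinarith
    set m := max a ((b-a)/Real.log 10) with hmdef
    have hmb : m < b := by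
      apply max_lt hab
      rw [div_lt_iff₀ hL0]
      linarith
    set c := (m + b)/2 with hcdef
    have hmc : m < c := by simp only [hcdef]; linarith
    have hcb : c < b := by simp only [hcdef]; linarith
    have hcL : (b-a)/Real.log 10 < c := lt_of_le_of_lt (le_max_right _ _) hmc
    have hc0 : 0 < c := lt_of_le_of_lt (by positivity) hcL
    set k := ⌊Real.logb 10 c⌋ with hkdef
    have hck : (10:ℝ) ^ k ≤ c := by
      have h := Int.floor_le (Real.logb 10 c)
      rw [Real.le_logb_iff_rpow_le (by norm_num) hc0] at h
      rwa [Real.rpow_intCast] at h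
    have hck' : c < (10:ℝ) ^ (k+1) := by
      have h := Int.lt_floor_add_one (Real.logb 10 c)
      rw [Real.logb_lt_iff_lt_rpow (by norm_num) hc0] at h
      rwa [show ((⌊Real.logb 10 c⌋:ℝ) + 1) = ((k+1 : ℤ) : ℝ) by push_cast; ring,
        Real.rpow_intCast] at h
    set d := min b ((c + (10:ℝ)^(k+1))/2) with hddef
    have hcd : c < d := lt_min hcb (by linarith)
    have hdb : d ≤ b := min_le_left _ _
    have hd' : d < (10:ℝ) ^ (k+1) := lt_of_le_of_lt (min_le_right _ _) (by linarith)
    have hd0 : 0 < d := hc0.trans hcd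
    have hp : (0:ℝ) < (10:ℝ) ^ (-k) := ten_zpow_pos _
    refine benford_uniform_key μ a b hab Y hY hunif hben c d
      (c * (10:ℝ)^(-k)) (d * (10:ℝ)^(-k))
      (le_trans (le_max_left _ _) hmc.le) hcd hdb
      ⟨one_le_aux hck, lt_ten_aux (hcd.trans_le (le_of_lt hd'))⟩
      ⟨le_trans (one_le_aux hck) (mul_le_mul_of_nonneg_right hcd.le hp.le),
        lt_ten_aux hd'⟩
      (mul_le_mul_of_nonneg_right hcd.le hp.le) ?_ ?_
    · intro x h1 h2
      have hx0 : 0 < x := hc0.trans h1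
      rw [abs_of_pos hx0, signif_of_mem (hck.trans h1.le) (lt_of_le_of_lt h2 hd')]
      exact ⟨mul_lt_mul_of_pos_right h1 hp, mul_le_mul_of_nonneg_right h2 hp.le⟩
    · rw [logb_mul_zpow hd0, logb_mul_zpow hc0]
      have hkey : Real.logb 10 d - Real.logb 10 c < (d - c)/(b - a) :=
        logb_sub_lt hc0 hcd hba (by
          rw [div_lt_iff₀ hL0] at hcL; linarith)
      linarith
  · -- use an interval near a, on the negative side
    have hbL : b * Real.log 10 ≤ b - a := not_lt.mp hcase
    have hMa : b - a < (-a) * Real.log 10 := by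
      rcases le_total b (-a) with h | h
      · have h3 : 0 < -a := by nlinarith
        nlinarith
      · nlinarith
    have ha0 : 0 < -a := by nlinarith
    set m := max (-b) ((b-a)/Real.log 10) with hmdef
    have hmM : m < -a := by
      apply max_lt (by linarith)
      rw [div_lt_iff₀ hL0]
      linarith
    set w := (m + -a)/2 with hwdef
    have hmw : m < w := by simp only [hwdef]; linarith
    have hwM : w < -a := by simp only [hwdef]; linarith
    have hmL : (b-a)/Real.log 10 ≤ m := le_max_right _ _
    have hw0 : 0 < w := lt_of_le_of_lt (le_trans (by positivity) hmL) hmw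
    set k := ⌈Real.logb 10 w⌉ - 1 with hkdef
    have hwk : (10:ℝ) ^ k < w := by
      have h : (k:ℝ) < Real.logb 10 w := by
        have := Int.ceil_lt_add_one (Real.logb 10 w)
        simp only [hkdef]; push_cast; linarith
      rw [Real.lt_logb_iff_rpow_lt (by norm_num) hw0] at h
      rwa [Real.rpow_intCast] at h
    have hwk' : w ≤ (10:ℝ) ^ (k+1) := by
      have h : Real.logb 10 w ≤ ((k+1 : ℤ) : ℝ) := by
        have := Int.le_ceil (Real.logb 10 w)
        simp only [hkdef]; push_cast; linarith
      rw [Real.logb_le_iff_le_rpow (by norm_num) hw0] at h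
      rwa [Real.rpow_intCast] at h
    set u := max m ((10:ℝ)^k) with hudef
    have huw : u < w := max_lt hmw hwk
    set p := (u + w)/2 with hpdef
    set q := (p + w)/2 with hqdef
    have hup : u < p := by simp only [hpdef]; linarith
    have hpq : p < q := by simp only [hqdef, hpdef]; linarith
    have hqw : q < w := by simp only [hqdef, hpdef]; linarith
    have hp10 : (10:ℝ) ^ k < p := lt_of_le_of_lt (le_max_right _ _) hup
    have hq10 : q < (10:ℝ) ^ (k+1) := lt_of_lt_of_le hqw hwk'
    have hp0 : 0 < p := (ten_zpow_pos k).trans hp10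
    have hpm : m < p := lt_of_le_of_lt (le_max_left _ _) hup
    have hpb : -b < p := lt_of_le_of_lt (le_max_left _ _) hpm
    have hpL : (b-a)/Real.log 10 < p := lt_of_le_of_lt hmL hpm
    have hzp : (0:ℝ) < (10:ℝ) ^ (-k) := ten_zpow_pos _
    -- significand bounds
    have hp'1 : 1 < p * (10:ℝ)^(-k) := one_lt_aux hp10
    have hp'10 : p * (10:ℝ)^(-k) < 10 := lt_ten_aux (hpq.trans hq10)
    have ht1 : 1 ≤ q * (10:ℝ)^(-k) := one_le_aux (hp10.trans hpq).le
    have ht10 : q * (10:ℝ)^(-k) < 10 := lt_ten_aux hq10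
    set δ := (q - p)/(b-a) - (Real.logb 10 q - Real.logb 10 p) with hδdef
    have hδ0 : 0 < δ := by
      have := logb_sub_lt hp0 hpq hba (by rw [div_lt_iff₀ hL0] at hpL; linarith)
      simp only [hδdef]; linarith
    set s := max 1 (p * (10:ℝ)^(-k) * (10:ℝ) ^ (-(δ/2)) : ℝ) with hsdef
    have hr1 : (10:ℝ) ^ (-(δ/2)) < 1 :=
      Real.rpow_lt_one_of_one_lt_of_neg (by norm_num) (neg_lt_zero.mpr (half_pos hδ0))
    have hr0 : (0:ℝ) < (10:ℝ) ^ (-(δ/2)) := Real.rpow_pos_of_pos (by norm_num) _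
    have hsp' : s < p * (10:ℝ)^(-k) := by
      apply max_lt hp'1
      calc p * (10:ℝ)^(-k) * (10:ℝ) ^ (-(δ/2)) < p * (10:ℝ)^(-k) * 1 :=
            mul_lt_mul_of_pos_left hr1 (by positivity)
        _ = p * (10:ℝ)^(-k) := by ring
    have hst : s ≤ q * (10:ℝ)^(-k) :=
      le_of_lt (lt_of_lt_of_le hsp' (mul_le_mul_of_nonneg_right hpq.le hzp.le))
    refine benford_uniform_key μ a b hab Y hY hunif hben (-q) (-p)
      s (q * (10:ℝ)^(-k))
      (by linarith) (by linarith) (by linarith)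
      ⟨le_max_left _ _, lt_of_lt_of_le hsp' hp'10.le⟩
      ⟨ht1, ht10⟩ hst ?_ ?_
    · intro x h1 h2
      have hx0 : x < 0 := lt_of_le_of_lt h2 (by linarith)
      have habs : |x| = -x := abs_of_neg hx0
      have hpx : p ≤ -x := by linarith
      have hxq : -x < q := by linarith
      rw [habs, signif_of_mem (le_trans hp10.le hpx) (hxq.trans hq10)]
      constructor
      · exact lt_of_lt_of_le hsp' (mul_le_mul_of_nonneg_right hpx hzp.le)
      · exact mul_le_mul_of_nonneg_right hxq.le hzp.le
    · -- log bound
      have hs0 : 0 < s := lt_of_lt_of_le one_pos (le_max_left _ _)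
      have hslb : Real.logb 10 p - k - δ/2 ≤ Real.logb 10 s := by
        have h1 : Real.logb 10 (p * (10:ℝ)^(-k) * (10:ℝ) ^ (-(δ/2)))
            = Real.logb 10 p - k - δ/2 := by
          rw [Real.logb_mul (by positivity) hr0.ne', logb_mul_zpow hp0,
            Real.logb_rpow (by norm_num) (by norm_num)]
          ring
        calc Real.logb 10 p - k - δ/2
            = Real.logb 10 (p * (10:ℝ)^(-k) * (10:ℝ) ^ (-(δ/2))) := h1.symm
          _ ≤ Real.logb 10 s :=
            Real.logb_le_logb_of_le (by norm_num) (by positivity) (le_max_right _ _)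
      rw [logb_mul_zpow ((hp0).trans hpq)]
      have hgoal : (-p - -q) = q - p := by ring
      rw [hgoal]
      simp only [hδdef] at hδ0 ⊢
      linarith
end

section
/- Let a, b be real numbers with b > 10a > 0, and let 0 < c₁ < c₂ < b/10 − a. Then, with U uniformly distributed on [0,1], the Benford random variables X_{c₁} = (a + c₁)·10^U and X_{c₂} = (a + c₂)·10^U have different distributions; consequently, the set of Benford probability distributions with range contained in [a, b] is infinite. -/
open MeasureTheory

/-- A probability measure `ν` on `ℝ` is Benford if
`ν {x : S(|x|) ≤ t} = log₁₀ t` for all `t ∈ [1,10)`. -/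
def IsBenfordMeasure (ν : Measure ℝ) : Prop :=
  ∀ t ∈ Set.Ico (1 : ℝ) 10,
    ν {x | signif |x| ≤ t} = ENNReal.ofReal (Real.logb 10 t)

lemma signif_abs (x : ℝ) : signif |x| = signif x := by
  unfold signif; simp [abs_abs, abs_eq_zero]

lemma signif_measurable : Measurable signif := by
  unfold signif
  apply Measurable.ite (measurableSet_eq) measurable_const
  apply measurable_abs.mul
  have h1 : Measurable fun x : ℝ => -⌊Real.logb 10 |x|⌋ := by
    have : Measurable fun x : ℝ => Real.logb 10 |x| := by
      unfold Real.logb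
      exact (Real.measurable_log.comp measurable_abs).div_const _
    exact (Int.measurable_floor.comp this).neg
  exact (measurable_from_top (β := ℝ) (f := fun k : ℤ => (10:ℝ) ^ k)).comp h1

lemma signif_of_pos {x : ℝ} (hx : 0 < x) :
    signif x = (10 : ℝ) ^ Int.fract (Real.logb 10 x) := by
  have h10 : (0:ℝ) < 10 := by norm_num
  have h10' : (10:ℝ) ≠ 1 := by norm_num
  have hxx : x = (10:ℝ) ^ Real.logb 10 x := (Real.rpow_logb h10 h10' hx).symm
  unfold signif
  rw [if_neg hx.ne', abs_of_pos hx]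
  set L := Real.logb 10 x with hL
  conv_lhs => rw [hxx]
  rw [← Real.rpow_intCast (10:ℝ) (-⌊L⌋), ← Real.rpow_add h10]
  congr 1
  push_cast
  rw [Int.fract]
  ring

section Unif

variable {Ω : Type*} [MeasurableSpace Ω] {μ : Measure Ω} [IsProbabilityMeasure μ]
  {U : Ω → ℝ} (hU : Measurable U) (hunif : IsUniformOn μ U 0 1)

include hunif in
omit [IsProbabilityMeasure μ] in
lemma cdf_eq {x : ℝ} (hx : x ∈ Set.Icc (0:ℝ) 1) :
    μ {ω | U ω ≤ x} = ENNReal.ofReal x := by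
  have := hunif x hx
  simpa using this

include hU hunif in
lemma point_null {x : ℝ} (hx : x ∈ Set.Ioc (0:ℝ) 1) : μ {ω | U ω = x} = 0 := by
  refine le_antisymm ?_ (zero_le)
  refine ENNReal.le_of_forall_pos_le_add fun ε hε _ => ?_
  rw [zero_add]
  set δ : ℝ := min (ε : ℝ) x with hδ
  have hδ0 : 0 < δ := lt_min hε hx.1
  have hδx : δ ≤ x := min_le_right _ _
  have hsub : {ω | U ω = x} ⊆ {ω | U ω ≤ x} \ {ω | U ω ≤ x - δ} := by
    intro ω hω
    simp only [Set.mem_setOf_eq] at hω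
    constructor
    · simp [hω]
    · simp only [Set.mem_setOf_eq, not_le, hω]
      linarith
  have hm2 : μ ({ω | U ω ≤ x} \ {ω | U ω ≤ x - δ}) = ENNReal.ofReal δ := by
    have hss : {ω | U ω ≤ x - δ} ⊆ {ω | U ω ≤ x} := by
      intro ω hω; simp only [Set.mem_setOf_eq] at *; linarith
    rw [measure_diff hss (measurableSet_le hU measurable_const).nullMeasurableSet
      (measure_ne_top μ _)]
    rw [cdf_eq hunif ⟨hx.1.le, hx.2⟩, cdf_eq hunif ⟨by linarith, by linarith [hx.2]⟩]
    rw [← ENNReal.ofReal_sub _ (by linarith)]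
    ring_nf
  calc μ {ω | U ω = x} ≤ ENNReal.ofReal δ := hm2 ▸ measure_mono hsub
    _ ≤ ENNReal.ofReal (ε : ℝ) := ENNReal.ofReal_le_ofReal (min_le_left _ _)
    _ = ε := ENNReal.ofReal_coe_nnreal

include hU hunif in
lemma ae_unit : ∀ᵐ ω ∂μ, 0 < U ω ∧ U ω ≤ 1 := by
  have h0 : μ {ω | U ω ≤ 0} = 0 := by
    simpa using cdf_eq hunif (by simp : (0:ℝ) ∈ Set.Icc (0:ℝ) 1)
  have h1 : μ {ω | 1 < U ω} = 0 := by
    have : μ {ω | U ω ≤ 1} = 1 := by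
      simpa using cdf_eq hunif (by simp : (1:ℝ) ∈ Set.Icc (0:ℝ) 1)
    have hc : {ω | 1 < U ω} = {ω | U ω ≤ 1}ᶜ := by ext ω; simp
    rw [hc, measure_compl (measurableSet_le hU measurable_const) (measure_ne_top μ _), this,
      measure_univ, tsub_self]
  have hA : ∀ᵐ ω ∂μ, ¬ U ω ≤ 0 := by
    rw [ae_iff]; simpa using h0
  have hB : ∀ᵐ ω ∂μ, ¬ 1 < U ω := by
    rw [ae_iff]; simpa using h1
  filter_upwards [hA, hB] with ω hA hB
  exact ⟨lt_of_not_ge hA, le_of_not_gt hB⟩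

include hU hunif in
lemma fract_measure (v : ℝ) {τ : ℝ} (hτ : τ ∈ Set.Ico (0:ℝ) 1) :
    μ {ω | Int.fract (v + U ω) ≤ τ} = ENNReal.ofReal τ := by
  set u : ℝ := Int.fract v with hu
  have hu0 : 0 ≤ u := Int.fract_nonneg v
  have hu1 : u < 1 := Int.fract_lt_one v
  obtain ⟨hτ0, hτ1⟩ := hτ
  have hfr : ∀ ω, Int.fract (v + U ω) = Int.fract (u + U ω) := by
    intro ω
    rw [show v + U ω = (⌊v⌋ : ℝ) + (u + U ω) by rw [hu]; push_cast [Int.fract]; ring,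
      Int.fract_intCast_add]
  set r : ℝ := min (1 + τ - u) 1 with hr
  have hr0 : 0 ≤ r := le_min (by linarith) (by norm_num)
  have hr1 : r ≤ 1 := min_le_right _ _
  have hr2 : 1 - u ≤ r := le_min (by linarith) (by linarith)
  set A : Set Ω := {ω | U ω ≤ τ - u} with hA
  set B : Set Ω := {ω | 1 - u < U ω ∧ U ω ≤ r} with hB
  have hmB : MeasurableSet B := by
    apply MeasurableSet.inter
    · exact measurableSet_lt measurable_const hU
    · exact measurableSet_le hU measurable_const
  have hae : ({ω | Int.fract (v + U ω) ≤ τ} : Set Ω) =ᵐ[μ] (A ∪ B : Set Ω) := by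
    have hpt : ∀ᵐ ω ∂μ, U ω ≠ 1 - u := by
      rw [ae_iff]
      have := point_null hU hunif (x := 1 - u) ⟨by linarith, by linarith⟩
      simpa using this
    filter_upwards [ae_unit hU hunif, hpt] with ω ⟨hω0, hω1⟩ hωp
    rw [eq_iff_iff]
    show Int.fract (v + U ω) ≤ τ ↔ ω ∈ A ∪ B
    simp only [Set.mem_setOf_eq, Set.mem_union, hfr ω, hA, hB]
    by_cases hc : u + U ω < 1
    · rw [Int.fract_eq_self.mpr ⟨by linarith, hc⟩]
      constructor
      · intro h; exact Or.inl (by linarith)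
      · rintro (h | ⟨h1, _⟩)
        · linarith
        · exfalso; linarith
    · push_neg at hc
      have hlt : 1 - u < U ω := lt_of_le_of_ne (by linarith) (Ne.symm hωp)
      have hfr2 : Int.fract (u + U ω) = u + U ω - 1 := by
        have h1 : Int.fract (u + U ω) = Int.fract (u + U ω - 1) := by
          rw [show u + U ω - 1 = u + U ω + ((-1 : ℤ) : ℝ) by push_cast; ring,
            Int.fract_add_intCast]
        rw [h1, Int.fract_eq_self.mpr ⟨by linarith, by linarith⟩]
      rw [hfr2]
      constructor
      · intro h
        exact Or.inr ⟨hlt, le_min (by linarith) hω1⟩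
      · rintro (h | ⟨_, h2⟩)
        · exfalso; linarith
        · have := le_trans h2 (min_le_left _ _)
          linarith
  rw [measure_congr hae]
  have hdisj : Disjoint A B := by
    rw [Set.disjoint_left]
    rintro ω hωA ⟨hωB, -⟩
    simp only [hA, Set.mem_setOf_eq] at hωA
    linarith
  rw [measure_union hdisj hmB]
  have hμB : μ B = ENNReal.ofReal (min τ u) := by
    have hsplit : {ω | U ω ≤ r} = {ω | U ω ≤ 1 - u} ∪ B := by
      ext ω
      simp only [Set.mem_setOf_eq, Set.mem_union, hB]
      constructor
      · intro h
        rcases le_or_gt (U ω) (1 - u) with h' | h'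
        · exact Or.inl h'
        · exact Or.inr ⟨h', h⟩
      · rintro (h | ⟨h1, h2⟩)
        · linarith
        · exact h2
    have hdisj2 : Disjoint {ω | U ω ≤ 1 - u} B := by
      rw [Set.disjoint_left]
      rintro ω hω1 ⟨hω2, -⟩
      simp only [Set.mem_setOf_eq] at hω1
      linarith
    have h1 : μ {ω | U ω ≤ r} = ENNReal.ofReal r := cdf_eq hunif ⟨hr0, hr1⟩
    have h2 : μ {ω | U ω ≤ 1 - u} = ENNReal.ofReal (1 - u) :=
      cdf_eq hunif ⟨by linarith, by linarith⟩
    rw [hsplit, measure_union hdisj2 hmB, h2] at h1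
    have := ENNReal.sub_eq_of_eq_add_rev (by simp [ENNReal.ofReal_ne_top]) h1.symm
    rw [← this, ← ENNReal.ofReal_sub _ (by linarith)]
    congr 1
    rcases le_total τ u with h | h
    · rw [min_eq_left h, hr, min_eq_left (by linarith)]; ring
    · rw [min_eq_right h, hr, min_eq_right (by linarith)]; ring
  rcases le_total u τ with h | h
  · have hμA : μ A = ENNReal.ofReal (τ - u) := cdf_eq hunif ⟨by linarith, by linarith⟩
    rw [hμA, hμB, min_eq_right h, ← ENNReal.ofReal_add (by linarith) hu0]
    congr 1; ring
  · have hμA : μ A = 0 := by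
      refine le_antisymm ?_ (zero_le)
      have hsub : A ⊆ {ω | U ω ≤ 0} := fun ω hω => by
        simp only [hA, Set.mem_setOf_eq] at *; linarith
      calc μ A ≤ μ {ω | U ω ≤ 0} := measure_mono hsub
        _ = 0 := by simpa using cdf_eq hunif (by simp : (0:ℝ) ∈ Set.Icc (0:ℝ) 1)
    rw [hμA, hμB, min_eq_left h, zero_add]

include hU in
lemma hX_meas (m : ℝ) : Measurable fun ω => m * (10:ℝ) ^ (U ω) := by
  have hc : Continuous fun x : ℝ => (10:ℝ) ^ x :=
    Continuous.rpow continuous_const continuous_id (fun x => Or.inl (by norm_num))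
  exact measurable_const.mul (hc.measurable.comp hU)

include hU hunif in
lemma benford_map {m : ℝ} (hm : 0 < m) :
    IsBenfordMeasure (Measure.map (fun ω => m * (10:ℝ) ^ (U ω)) μ) := by
  intro t ⟨ht1, ht10⟩
  have h10 : (0:ℝ) < 10 := by norm_num
  have h10' : (10:ℝ) ≠ 1 := by norm_num
  have h110 : (1:ℝ) < 10 := by norm_num
  have ht0 : (0:ℝ) < t := by linarith
  have hms : MeasurableSet {x : ℝ | signif |x| ≤ t} :=
    measurableSet_le (signif_measurable.comp measurable_abs) measurable_const
  rw [Measure.map_apply (hX_meas hU m) hms]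
  have hset : ((fun ω => m * (10:ℝ) ^ (U ω)) ⁻¹' {x | signif |x| ≤ t}) =
      {ω | Int.fract (Real.logb 10 m + U ω) ≤ Real.logb 10 t} := by
    ext ω
    have hXpos : 0 < m * (10:ℝ) ^ (U ω) := mul_pos hm (Real.rpow_pos_of_pos h10 _)
    simp only [Set.mem_preimage, Set.mem_setOf_eq, signif_abs, signif_of_pos hXpos]
    rw [Real.logb_mul hm.ne' (Real.rpow_pos_of_pos h10 _).ne',
      Real.logb_rpow h10 h10']
    constructor
    · intro h
      have := (Real.rpow_le_rpow_left_iff h110).mp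
        (le_trans h (le_of_eq (Real.rpow_logb h10 h10' ht0).symm))
      exact this
    · intro h
      calc (10:ℝ) ^ Int.fract (Real.logb 10 m + U ω) ≤ (10:ℝ) ^ Real.logb 10 t :=
        (Real.rpow_le_rpow_left_iff h110).mpr h
        _ = t := Real.rpow_logb h10 h10' ht0
  rw [hset]
  exact fract_measure hU hunif _ ⟨Real.logb_nonneg h110 ht1, by
    calc Real.logb 10 t < Real.logb 10 10 := Real.logb_lt_logb h110 ht0 ht10
      _ = 1 := by simp⟩

include hU hunif in
lemma maps_ne {m₁ m₂ : ℝ} (h1 : 0 < m₁) (h12 : m₁ < m₂) :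
    Measure.map (fun ω => m₁ * (10:ℝ) ^ (U ω)) μ ≠
      Measure.map (fun ω => m₂ * (10:ℝ) ^ (U ω)) μ := by
  intro heq
  have h10 : (0:ℝ) < 10 := by norm_num
  have h110 : (1:ℝ) < 10 := by norm_num
  have h2 : 0 < m₂ := h1.trans h12
  set s : ℝ := Real.logb 10 (m₂ / m₁) with hs
  have hs0 : 0 < s := Real.logb_pos h110 ((one_lt_div h1).mpr h12)
  set s' : ℝ := min s 1 with hs'
  have hs'0 : 0 < s' := lt_min hs0 one_pos
  have hs'1 : s' ≤ 1 := min_le_right _ _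
  have hmap1 : ENNReal.ofReal s' ≤
      Measure.map (fun ω => m₁ * (10:ℝ) ^ (U ω)) μ (Set.Iic m₂) := by
    rw [Measure.map_apply (hX_meas hU m₁) measurableSet_Iic]
    rw [← cdf_eq hunif ⟨hs'0.le, hs'1⟩]
    apply measure_mono
    intro ω hω
    simp only [Set.mem_setOf_eq] at hω
    simp only [Set.mem_preimage, Set.mem_Iic]
    have : (10:ℝ) ^ (U ω) ≤ (10:ℝ) ^ s :=
      Real.rpow_le_rpow_left_iff h110 |>.mpr (le_trans hω (min_le_left _ _))
    have hrs : (10:ℝ) ^ s = m₂ / m₁ := Real.rpow_logb (by norm_num) (by norm_num)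
      (div_pos h2 h1)
    calc m₁ * (10:ℝ) ^ (U ω) ≤ m₁ * (m₂ / m₁) := by
          rw [← hrs]; exact mul_le_mul_of_nonneg_left this h1.le
      _ = m₂ := by field_simp
  have hmap2 : Measure.map (fun ω => m₂ * (10:ℝ) ^ (U ω)) μ (Set.Iic m₂) = 0 := by
    rw [Measure.map_apply (hX_meas hU m₂) measurableSet_Iic]
    have hpre : ((fun ω => m₂ * (10:ℝ) ^ (U ω)) ⁻¹' Set.Iic m₂) = {ω | U ω ≤ 0} := by
      ext ω
      simp only [Set.mem_preimage, Set.mem_Iic, Set.mem_setOf_eq]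
      constructor
      · intro h
        have h' : (10:ℝ) ^ (U ω) ≤ 1 := (mul_le_iff_le_one_right h2).mp h
        have : (10:ℝ) ^ (U ω) ≤ (10:ℝ) ^ (0:ℝ) := by simpa using h'
        exact (Real.rpow_le_rpow_left_iff h110).mp this
      · intro h
        have : (10:ℝ) ^ (U ω) ≤ (10:ℝ) ^ (0:ℝ) :=
          (Real.rpow_le_rpow_left_iff h110).mpr h
        simp only [Real.rpow_zero] at this
        exact (mul_le_iff_le_one_right h2).mpr this
    rw [hpre]
    simpa using cdf_eq hunif (by simp : (0:ℝ) ∈ Set.Icc (0:ℝ) 1)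
  rw [heq, hmap2] at hmap1
  exact (ENNReal.ofReal_pos.mpr hs'0).not_ge hmap1


include hU hunif in
lemma support_map {m a b : ℝ} (ham : 0 < a) (haa : a ≤ m) (hmb : 10 * m ≤ b) :
    Measure.map (fun ω => m * (10:ℝ) ^ (U ω)) μ (Set.Icc a b)ᶜ = 0 := by
  have hm : 0 < m := lt_of_lt_of_le ham haa
  rw [Measure.map_apply (hX_meas hU m) measurableSet_Icc.compl]
  have hmem : ∀ᵐ ω ∂μ, m * (10:ℝ) ^ (U ω) ∈ Set.Icc a b := by
    filter_upwards [ae_unit hU hunif] with ω ⟨h0, h1⟩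
    have h110 : (1:ℝ) < 10 := by norm_num
    have hge : (10:ℝ) ^ (0:ℝ) ≤ (10:ℝ) ^ (U ω) :=
      (Real.rpow_le_rpow_left_iff h110).mpr h0.le
    have hle : (10:ℝ) ^ (U ω) ≤ (10:ℝ) ^ (1:ℝ) :=
      (Real.rpow_le_rpow_left_iff h110).mpr h1
    simp only [Real.rpow_zero, Real.rpow_one] at hge hle
    constructor
    · nlinarith
    · nlinarith
  have h0 := ae_iff.mp hmem
  have hset : ((fun ω => m * (10:ℝ) ^ (U ω)) ⁻¹' (Set.Icc a b)ᶜ) =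
      {ω | ¬ m * (10:ℝ) ^ (U ω) ∈ Set.Icc a b} := by
    ext ω; simp [Set.mem_preimage]
  rw [hset]
  exact h0

end Unif

/-- If `b > 10a > 0` and `0 < c₁ < c₂ < b/10 − a`, then the Benford random
variables `X_{c₁} = (a+c₁)·10^U` and `X_{c₂} = (a+c₂)·10^U` (with `U` uniform
on `[0,1]`) have different distributions; consequently the set of Benford
probability distributions supported in `[a,b]` is infinite. -/
theorem infinitely_many_benford_distributions
    {Ω : Type*} [MeasurableSpace Ω] (μ : Measure Ω) [IsProbabilityMeasure μ]
    (a b c₁ c₂ : ℝ) (hab : 10 * a < b) (ha : 0 < 10 * a)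
    (hc₁ : 0 < c₁) (hc₁₂ : c₁ < c₂) (hc₂ : c₂ < b / 10 - a)
    (U : Ω → ℝ) (hU : Measurable U) (hunif : IsUniformOn μ U 0 1) :
    Measure.map (fun ω => (a + c₁) * (10 : ℝ) ^ (U ω)) μ ≠
        Measure.map (fun ω => (a + c₂) * (10 : ℝ) ^ (U ω)) μ ∧
      {ν : Measure ℝ | IsProbabilityMeasure ν ∧ ν (Set.Icc a b)ᶜ = 0 ∧
        IsBenfordMeasure ν}.Infinite := by
  have ha0 : 0 < a := by linarith
  constructor
  · exact maps_ne hU hunif (by linarith) (by linarith)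
  · have h0b : (0:ℝ) < b / 10 - a := by linarith
    haveI : Infinite (Set.Ioo (0:ℝ) (b / 10 - a)) := Set.Ioo.infinite h0b
    set f : Set.Ioo (0:ℝ) (b / 10 - a) → Measure ℝ :=
      fun c => Measure.map (fun ω => (a + (c : ℝ)) * (10:ℝ) ^ (U ω)) μ with hf
    have hmem : ∀ c : Set.Ioo (0:ℝ) (b / 10 - a),
        f c ∈ {ν : Measure ℝ | IsProbabilityMeasure ν ∧ ν (Set.Icc a b)ᶜ = 0 ∧
          IsBenfordMeasure ν} := by
      intro c
      obtain ⟨hc0, hcb⟩ := c.2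
      have hm : 0 < a + (c : ℝ) := by linarith
      refine ⟨?_, ?_, ?_⟩
      · exact Measure.isProbabilityMeasure_map (hX_meas hU _).aemeasurable
      · exact support_map hU hunif ha0 (by linarith) (by linarith)
      · exact benford_map hU hunif hm
    have hinj : Function.Injective f := by
      intro c c' h
      rcases lt_trichotomy (c : ℝ) (c' : ℝ) with hlt | heq | hgt
      · exact absurd h (maps_ne hU hunif (by linarith [c.2.1]) (by linarith))
      · exact Subtype.ext heq
      · exact absurd h.symm (maps_ne hU hunif (by linarith [c'.2.1]) (by linarith))
    exact Set.infinite_of_injective_forall_mem hinj hmem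
end
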